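/- arXiv:math/0602311 — 6 statements merged into one kernel-verified Lean document; each statement's English description precedes it below -/
import Mathlib

section
/- Let φ, ψ ∈ C[1,∞) ∩ C²(1,∞) satisfy: φ is strictly increasing with φ(1) = 0; ψ is bounded, ψ(1) = 0, ψ ≥ 0 and ψ is not identically 0; and ψ(μ)/φ(μ) → 0 as μ → ∞. Suppose lim_{μ→1+} ψ(μ)/φ(μ) exists and is strictly smaller than Ψ* := sup_{μ>1} ψ(μ)/φ(μ). Then the set {μ > 1 : ψ(μ)/φ(μ) = Ψ*} is nonempty and has a largest element μ*, and for every 0 ≤ z ≤ φ(μ*), the value Ψ(z) := sup{∫ ψ dF : F ∈ ℱ, ∫ φ dF ≤ z} equals Ψ*·z and is attained by the mixture F = (1 − z/φ(μ*)) δ_1 + (z/φ(μ*)) δ_{μ*} of point masses at 1 and μ*. -/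
open MeasureTheory Filter Set
open scoped ENNReal

/-- `ℱ`: probability measures supported on `[1,∞)`. -/
def mixSet : Set (Measure ℝ) := {F | IsProbabilityMeasure F ∧ ∀ᵐ m ∂F, 1 ≤ m}

/-- The feasible set `{F ∈ ℱ : ∫ φ dF ≤ z}` for the envelope problem. -/
def constrSet (φ : ℝ → ℝ) (z : ℝ) : Set (Measure ℝ) :=
  {F | F ∈ mixSet ∧ ∫⁻ m, ENNReal.ofReal (φ m) ∂F ≤ ENNReal.ofReal z}

/-- The generalized convex envelope `Ψ(z) = sup {∫ ψ dF : F ∈ ℱ, ∫ φ dF ≤ z}`. -/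
noncomputable def PsiEnv (φ ψ : ℝ → ℝ) (z : ℝ) : ℝ≥0∞ :=
  ⨆ F ∈ constrSet φ z, ∫⁻ m, ENNReal.ofReal (ψ m) ∂F

/-- The two-point mixture `(1-ε) δ_a + ε δ_b`. -/
noncomputable def twoPoint (a b ε : ℝ) : Measure ℝ :=
  ENNReal.ofReal (1 - ε) • Measure.dirac a + ENNReal.ofReal ε • Measure.dirac b

/-- `Ψ* = sup_{μ > 1} ψ(μ)/φ(μ)`. -/
noncomputable def PsiStar (φ ψ : ℝ → ℝ) : ℝ := sSup {y | ∃ m, 1 < m ∧ y = ψ m / φ m}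

private lemma twoPoint_lintegral (a b ε : ℝ) (f : ℝ → ℝ≥0∞) :
    ∫⁻ m, f m ∂(twoPoint a b ε) =
      ENNReal.ofReal (1 - ε) * f a + ENNReal.ofReal ε * f b := by
  simp [twoPoint, lintegral_add_measure, lintegral_smul_measure, lintegral_dirac]

private lemma twoPoint_ae (a b ε : ℝ) (P : ℝ → Prop) (ha : P a) (hb : P b) :
    ∀ᵐ m ∂(twoPoint a b ε), P m := by
  rw [twoPoint, ae_add_measure_iff]
  constructor <;> refine Measure.ae_smul_measure ?_ _ <;> rw [ae_dirac_eq] <;> assumption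

/-- Lemma 3.1: under the stated conditions on `φ, ψ` and assuming
`lim_{μ→1+} ψ(μ)/φ(μ)` exists and is `< Ψ*`, the set `{μ > 1 : ψ(μ)/φ(μ) = Ψ*}` has a
largest element `μ*`, and for `0 ≤ z ≤ φ(μ*)` the envelope satisfies `Ψ(z) = Ψ* · z`,
attained by the two-point mixture `(1 - z/φ(μ*)) δ_1 + (z/φ(μ*)) δ_{μ*}`. -/
theorem envelope_of_finite_limit (φ ψ : ℝ → ℝ)
    (hφc : ContinuousOn φ (Set.Ici 1)) (hφ2 : ContDiffOn ℝ 2 φ (Set.Ioi 1))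
    (hψc : ContinuousOn ψ (Set.Ici 1)) (hψ2 : ContDiffOn ℝ 2 ψ (Set.Ioi 1))
    (hφmono : StrictMonoOn φ (Set.Ici 1)) (hφ1 : φ 1 = 0)
    (hψbdd : ∃ C : ℝ, ∀ m, 1 ≤ m → |ψ m| ≤ C) (hψ1 : ψ 1 = 0)
    (hψnonneg : ∀ m, 1 ≤ m → 0 ≤ ψ m) (hψne : ∃ m, 1 ≤ m ∧ ψ m ≠ 0)
    (hlim_top : Tendsto (fun m => ψ m / φ m) atTop (nhds 0))
    (L : ℝ) (hL : Tendsto (fun m => ψ m / φ m) (nhdsWithin 1 (Set.Ioi 1)) (nhds L))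
    (hLlt : L < PsiStar φ ψ) :
    ∃ mstar, (1 < mstar ∧ ψ mstar / φ mstar = PsiStar φ ψ) ∧
      (∀ m, 1 < m → ψ m / φ m = PsiStar φ ψ → m ≤ mstar) ∧
      ∀ z, 0 ≤ z → z ≤ φ mstar →
        PsiEnv φ ψ z = ENNReal.ofReal (PsiStar φ ψ * z) ∧
        twoPoint 1 mstar (z / φ mstar) ∈ constrSet φ z ∧
        ∫⁻ m, ENNReal.ofReal (ψ m) ∂(twoPoint 1 mstar (z / φ mstar)) =
          ENNReal.ofReal (PsiStar φ ψ * z) := by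
  have hPsi_eq : PsiStar φ ψ = sSup {y | ∃ m, 1 < m ∧ y = ψ m / φ m} := rfl
  set S : Set ℝ := {y | ∃ m, 1 < m ∧ y = ψ m / φ m} with hS
  have hφpos : ∀ m, 1 < m → 0 < φ m := by
    intro m hm
    have := hφmono (mem_Ici.2 le_rfl) (mem_Ici.2 hm.le) hm
    rwa [hφ1] at this
  have hgnn : ∀ m, 1 < m → 0 ≤ ψ m / φ m := fun m hm =>
    div_nonneg (hψnonneg m hm.le) (hφpos m hm).le
  have hL0 : 0 ≤ L := by
    refine ge_of_tendsto hL ?_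
    filter_upwards [self_mem_nhdsWithin] with m hm
    exact hgnn m hm
  have hSne : S.Nonempty := ⟨ψ 2 / φ 2, 2, one_lt_two, rfl⟩
  have hSbdd : BddAbove S := by
    by_contra h
    have : PsiStar φ ψ = 0 := by rw [hPsi_eq]; exact Real.sSup_of_not_bddAbove h
    linarith
  have hΨpos : 0 < PsiStar φ ψ := lt_of_le_of_lt hL0 hLlt
  have hmem : ∀ m, 1 < m → ψ m / φ m ≤ PsiStar φ ψ := by
    intro m hm
    rw [hPsi_eq]
    exact le_csSup hSbdd ⟨m, hm, rfl⟩
  have hψle : ∀ m, 1 ≤ m → ψ m ≤ PsiStar φ ψ * φ m := by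
    intro m hm
    rcases eq_or_lt_of_le hm with h | h
    · rw [← h, hψ1, hφ1, mul_zero]
    · exact (div_le_iff₀ (hφpos m h)).1 (hmem m h)
  -- bounds away from the supremum near the endpoints
  set c : ℝ := max ((L + PsiStar φ ψ) / 2) (PsiStar φ ψ / 2) with hc
  have hcΨ : c < PsiStar φ ψ := by
    rw [hc]; apply max_lt <;> linarith
  have h1 : ∀ᶠ m in nhdsWithin 1 (Set.Ioi 1), ψ m / φ m < (L + PsiStar φ ψ) / 2 :=
    Filter.Tendsto.eventually_lt_const (by linarith) hL
  obtain ⟨a', ha', hsub⟩ := mem_nhdsGT_iff_exists_Ioo_subset.1 h1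
  set a : ℝ := (1 + a') / 2 with hadef
  have ha1 : 1 < a := by rw [hadef]; have := mem_Ioi.1 ha'; linarith
  have haa' : a < a' := by rw [hadef]; have := mem_Ioi.1 ha'; linarith
  obtain ⟨b0, hb0⟩ := eventually_atTop.1
    (Filter.Tendsto.eventually_lt_const (half_pos hΨpos) hlim_top)
  set b : ℝ := max b0 a with hb
  have hab : a ≤ b := le_max_right _ _
  have houtc : ∀ m, 1 < m → m ∉ Icc a b → ψ m / φ m ≤ c := by
    intro m hm hnot
    rw [mem_Icc, not_and_or, not_le, not_le] at hnot
    rcases hnot with hma | hmb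
    · exact (hsub ⟨hm, hma.trans haa'⟩).le.trans (le_max_left _ _)
    · exact (hb0 m ((le_max_left b0 a).trans hmb.le)).le.trans (le_max_right _ _)
  have hout : ∀ m, 1 < m → m ∉ Icc a b → ψ m / φ m < PsiStar φ ψ :=
    fun m hm hnot => (houtc m hm hnot).trans_lt hcΨ
  have hKsub : Icc a b ⊆ Set.Ioi 1 := fun m hm => lt_of_lt_of_le ha1 hm.1
  have hgcont : ContinuousOn (fun m => ψ m / φ m) (Icc a b) := by
    apply ContinuousOn.div
    · exact hψc.mono (Subset.trans hKsub Ioi_subset_Ici_self)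
    · exact hφc.mono (Subset.trans hKsub Ioi_subset_Ici_self)
    · exact fun m hm => (hφpos m (hKsub hm)).ne'
  obtain ⟨m0, hm0K, hm0max⟩ :=
    isCompact_Icc.exists_isMaxOn ⟨a, le_rfl, hab⟩ hgcont
  have hm0 : ψ m0 / φ m0 = PsiStar φ ψ := by
    refine le_antisymm (hmem m0 (hKsub hm0K)) ?_
    have h1 : PsiStar φ ψ ≤ max c (ψ m0 / φ m0) := by
      rw [hPsi_eq]
      refine csSup_le hSne ?_
      rintro y ⟨m, hm, rfl⟩
      by_cases hK : m ∈ Icc a b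
      · exact le_max_of_le_right (hm0max hK)
      · exact le_max_of_le_left (houtc m hm hK)
    rcases max_cases c (ψ m0 / φ m0) with ⟨he, _⟩ | ⟨he, _⟩
    · rw [he] at h1; linarith
    · rwa [he] at h1
  -- the set of maximizers and its largest element
  set M : Set ℝ := Icc a b ∩ (fun m => ψ m / φ m) ⁻¹' {PsiStar φ ψ} with hM
  have hMclosed : IsClosed M :=
    hgcont.preimage_isClosed_of_isClosed isClosed_Icc isClosed_singleton
  have hMcomp : IsCompact M :=
    isCompact_Icc.of_isClosed_subset hMclosed inter_subset_left
  have hMne : M.Nonempty := ⟨m0, hm0K, hm0⟩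
  obtain ⟨mstar, hmstarM, hmax⟩ := hMcomp.exists_isMaxOn hMne continuousOn_id
  have hms1 : 1 < mstar := hKsub hmstarM.1
  have hmsΨ : ψ mstar / φ mstar = PsiStar φ ψ := hmstarM.2
  have hφms : 0 < φ mstar := hφpos mstar hms1
  have hψms : ψ mstar = PsiStar φ ψ * φ mstar := by
    field_simp at hmsΨ ⊢
    linarith [hmsΨ]
  refine ⟨mstar, ⟨hms1, hmsΨ⟩, ?_, ?_⟩
  · intro m hm1 hmΨ
    have hmK : m ∈ Icc a b := by
      by_contra hK
      exact absurd hmΨ (hout m hm1 hK).ne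
    exact hmax ⟨hmK, hmΨ⟩
  · intro z hz0 hz1
    set ε : ℝ := z / φ mstar with hε
    have hε0 : 0 ≤ ε := div_nonneg hz0 hφms.le
    have hε1 : ε ≤ 1 := (div_le_one hφms).2 hz1
    have hTP_prob : IsProbabilityMeasure (twoPoint 1 mstar ε) := by
      constructor
      simp only [twoPoint, Measure.add_apply, Measure.smul_apply,
        Measure.dirac_apply_of_mem (mem_univ _), smul_eq_mul, mul_one]
      rw [← ENNReal.ofReal_add (by linarith) hε0]
      norm_num
    have hTP_ae : ∀ᵐ m ∂(twoPoint 1 mstar ε), (1:ℝ) ≤ m :=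
      twoPoint_ae 1 mstar ε _ le_rfl hms1.le
    have hφint : ∫⁻ m, ENNReal.ofReal (φ m) ∂(twoPoint 1 mstar ε) = ENNReal.ofReal z := by
      rw [twoPoint_lintegral, hφ1]
      simp only [ENNReal.ofReal_zero, mul_zero, zero_add]
      rw [← ENNReal.ofReal_mul hε0, hε, div_mul_cancel₀ z hφms.ne']
    have hψint : ∫⁻ m, ENNReal.ofReal (ψ m) ∂(twoPoint 1 mstar ε) =
        ENNReal.ofReal (PsiStar φ ψ * z) := by
      rw [twoPoint_lintegral, hψ1]
      simp only [ENNReal.ofReal_zero, mul_zero, zero_add]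
      rw [← ENNReal.ofReal_mul hε0]
      congr 1
      rw [hψms, hε]
      field_simp
    have hmemC : twoPoint 1 mstar ε ∈ constrSet φ z := ⟨⟨hTP_prob, hTP_ae⟩, hφint.le⟩
    refine ⟨?_, hmemC, hψint⟩
    refine le_antisymm ?_ ?_
    · refine iSup₂_le ?_
      intro F hF
      calc ∫⁻ m, ENNReal.ofReal (ψ m) ∂F
          ≤ ∫⁻ m, ENNReal.ofReal (PsiStar φ ψ) * ENNReal.ofReal (φ m) ∂F := by
            refine lintegral_mono_ae (hF.1.2.mono fun m hm => ?_)
            rw [← ENNReal.ofReal_mul hΨpos.le]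
            exact ENNReal.ofReal_le_ofReal (hψle m hm)
        _ = ENNReal.ofReal (PsiStar φ ψ) * ∫⁻ m, ENNReal.ofReal (φ m) ∂F :=
            lintegral_const_mul' _ _ ENNReal.ofReal_ne_top
        _ ≤ ENNReal.ofReal (PsiStar φ ψ) * ENNReal.ofReal z :=
            mul_le_mul_right hF.2 _
        _ = ENNReal.ofReal (PsiStar φ ψ * z) := (ENNReal.ofReal_mul hΨpos.le).symm
    · rw [← hψint]
      exact le_iSup₂_of_le (twoPoint 1 mstar ε) hmemC le_rfl
end

section
/- Fix 0 < q < 1. For every G ∈ 𝒢 with G ≠ E, the equation Ḡ(t) = e^{-t}/q has a unique solution t in [0,∞), where Ḡ = 1 − G; consequently T_q(G) is this unique solution. -/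
open MeasureTheory Filter Set
open scoped ENNReal

/-- The cdf of the scale mixture of exponentials `E#F`:
`G(t) = ∫ (1 − e^{−t/μ}) dF(μ)` for `t ≥ 0`, and `0` for `t < 0`. -/
noncomputable def mixCdf (F : Measure ℝ) : ℝ → ℝ :=
  fun t => if 0 ≤ t then ∫ m, (1 - Real.exp (-t / m)) ∂F else 0

/-- The cdf of `Exp(1)`. -/
noncomputable def Ecdf : ℝ → ℝ := fun t => if 0 ≤ t then 1 - Real.exp (-t) else 0

/-- `𝒢`: the scale mixtures of exponentials. -/
def scaleMixtures : Set (ℝ → ℝ) := {G | ∃ F ∈ mixSet, G = mixCdf F}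

/-- The FDR functional `T_q(G) = inf {t ≥ 0 : 1 − G(t) ≥ e^{−t}/q}` (`= ∞` if no such `t`),
valued in `ℝ≥0∞`. -/
noncomputable def Tq (q : ℝ) (G : ℝ → ℝ) : ℝ≥0∞ :=
  sInf (ENNReal.ofReal '' {t : ℝ | 0 ≤ t ∧ Real.exp (-t) / q ≤ 1 - G t})

/-- Lemma 4.1: for `0 < q < 1` and `G ∈ 𝒢`, `G ≠ E`, the equation
`1 − G(t) = e^{−t}/q` has a unique solution `t ∈ [0,∞)`, and `T_q(G)` equals this solution. -/
theorem Tq_unique_crossing (q : ℝ) (hq : 0 < q) (hq1 : q < 1) (G : ℝ → ℝ)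
    (hG : G ∈ scaleMixtures) (hne : G ≠ Ecdf) :
    (∃! t : ℝ, 0 ≤ t ∧ 1 - G t = Real.exp (-t) / q) ∧
    ∀ t : ℝ, 0 ≤ t → 1 - G t = Real.exp (-t) / q → Tq q G = ENNReal.ofReal t := by
  obtain ⟨F, ⟨hFprob, hF1⟩, rfl⟩ := hG
  haveI := hFprob
  set a : ℝ → ℝ := fun m => 1 - m⁻¹ with ha_def
  set h : ℝ → ℝ := fun t => ∫ m, Real.exp (t * a m) ∂F with hh_def
  -- basic measurability
  have hmeas : ∀ t : ℝ, Measurable (fun m => Real.exp (t * a m)) := by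
    intro t
    exact ((measurable_const.sub measurable_inv).const_mul t).exp
  -- a.e. bounds on a
  have ha_ae : ∀ᵐ m ∂F, 0 ≤ a m ∧ a m ≤ 1 := by
    filter_upwards [hF1] with m hm
    have hm0 : (0:ℝ) < m := lt_of_lt_of_le one_pos hm
    constructor
    · have : m⁻¹ ≤ 1 := by
        rw [inv_le_one_iff₀]; right; exact hm
      simp only [ha_def]; linarith
    · have : 0 < m⁻¹ := inv_pos.mpr hm0
      simp only [ha_def]; linarith
  -- integrability
  have hint : ∀ t : ℝ, Integrable (fun m => Real.exp (t * a m)) F := by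
    intro t
    refine Integrable.mono' (integrable_const (Real.exp |t|)) (hmeas t).aestronglyMeasurable ?_
    filter_upwards [ha_ae] with m ⟨hm0, hm1⟩
    rw [Real.norm_eq_abs, abs_of_pos (Real.exp_pos _)]
    apply Real.exp_le_exp.mpr
    calc t * a m ≤ |t * a m| := le_abs_self _
      _ = |t| * |a m| := abs_mul _ _
      _ ≤ |t| * 1 := by
          apply mul_le_mul_of_nonneg_left _ (abs_nonneg t)
          rw [abs_of_nonneg hm0]; exact hm1
      _ = |t| := mul_one _
  -- key identity: 1 - G t = exp(-t) * h t for t ≥ 0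
  have hexp_id : ∀ t m : ℝ, Real.exp (-t / m) = Real.exp (-t) * Real.exp (t * a m) := by
    intro t m
    rw [← Real.exp_add]
    congr 1
    simp only [ha_def, div_eq_mul_inv]
    ring
  have hint' : ∀ t : ℝ, Integrable (fun m => Real.exp (-t / m)) F := by
    intro t
    have := (hint t).const_mul (Real.exp (-t))
    refine this.congr (ae_of_all _ fun m => ?_)
    exact (hexp_id t m).symm
  have hGbar : ∀ t : ℝ, 0 ≤ t → 1 - mixCdf F t = Real.exp (-t) * h t := by
    intro t ht
    have h1 : mixCdf F t = ∫ m, (1 - Real.exp (-t / m)) ∂F := by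
      simp [mixCdf, ht]
    rw [h1, integral_sub (integrable_const 1) (hint' t)]
    simp only [integral_const, measureReal_def, measure_univ, ENNReal.toReal_one, smul_eq_mul, one_mul]
    have : ∫ m, Real.exp (-t / m) ∂F = Real.exp (-t) * h t := by
      rw [hh_def, ← integral_const_mul]
      exact integral_congr_ae (ae_of_all _ fun m => hexp_id t m)
    rw [this]; ring
  -- equation equivalence
  have heqv : ∀ t : ℝ, 0 ≤ t → ((1 - mixCdf F t = Real.exp (-t) / q) ↔ h t = 1 / q) := by
    intro t ht
    rw [hGbar t ht]
    have hcancel : Real.exp t * Real.exp (-t) = 1 := by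
      rw [← Real.exp_add]; simp
    constructor
    · intro he
      have h2 : Real.exp t * (Real.exp (-t) * h t) = Real.exp t * (Real.exp (-t) / q) := by
        rw [he]
      rw [← mul_assoc, hcancel, one_mul, ← mul_div_assoc, hcancel] at h2
      exact h2
    · intro he; rw [he]; ring
  have hineqv : ∀ t : ℝ, 0 ≤ t → ((Real.exp (-t) / q ≤ 1 - mixCdf F t) ↔ 1 / q ≤ h t) := by
    intro t ht
    rw [hGbar t ht, div_le_iff₀ hq, div_le_iff₀ hq]
    constructor
    · intro he
      have h2 := mul_le_mul_of_nonneg_left he (le_of_lt (Real.exp_pos t))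
      rw [← mul_assoc, ← mul_assoc, ← Real.exp_add] at h2
      simpa using h2
    · intro he
      have h2 := mul_le_mul_of_nonneg_left he (le_of_lt (Real.exp_pos (-t)))
      linarith [h2]
  -- h 0 = 1
  have hh0 : h 0 = 1 := by
    simp [hh_def]
  -- continuity of h
  have hcont : Continuous h := by
    rw [continuous_iff_continuousAt]
    intro t₀
    apply continuousAt_of_dominated (bound := fun _ => Real.exp (|t₀| + 1))
    · exact Eventually.of_forall fun t => (hmeas t).aestronglyMeasurable
    · have hev : ∀ᶠ t in nhds t₀, t ∈ Ioo (t₀ - 1) (t₀ + 1) :=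
        Ioo_mem_nhds (by linarith) (by linarith)
      filter_upwards [hev] with t ht
      filter_upwards [ha_ae] with m ⟨hm0, hm1⟩
      rw [Real.norm_eq_abs, abs_of_pos (Real.exp_pos _)]
      apply Real.exp_le_exp.mpr
      have habs : |t| ≤ |t₀| + 1 := by
        rw [abs_le]; obtain ⟨h1, h2⟩ := ht
        constructor <;> [linarith [neg_abs_le t₀]; linarith [le_abs_self t₀]]
      calc t * a m ≤ |t| * a m + |t| * (1 - a m) := by
            nlinarith [le_abs_self t, abs_nonneg t]
        _ = |t| := by ring
        _ ≤ |t₀| + 1 := habs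
    · exact integrable_const _
    · refine ae_of_all _ fun m => ?_
      exact (Real.continuous_exp.comp (continuous_id.mul continuous_const)).continuousAt
  -- G ≠ E implies F is not a.e. the point mass at 1
  have hne1 : ¬ (∀ᵐ m ∂F, m = 1) := by
    intro hae
    apply hne
    funext t
    simp only [mixCdf, Ecdf]
    by_cases ht : 0 ≤ t
    · rw [if_pos ht, if_pos ht]
      have : ∫ m, (1 - Real.exp (-t / m)) ∂F = ∫ _, (1 - Real.exp (-t)) ∂F := by
        refine integral_congr_ae ?_
        filter_upwards [hae] with m hm
        rw [hm, div_one]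
      rw [this]
      simp [integral_const, measure_univ]
    · rw [if_neg ht, if_neg ht]
  -- positive mass above 1 + ε
  have hpos : ∃ ε : ℝ, 0 < ε ∧ 0 < F {m | 1 + ε ≤ m} := by
    by_contra hc
    push_neg at hc
    apply hne1
    have hall : ∀ n : ℕ, ∀ᵐ (m : ℝ) ∂F, m < 1 + 1 / ((n : ℝ) + 1) := by
      intro n
      have hn : (0:ℝ) < 1 / (n + 1) := by positivity
      have h0 : F {m | 1 + 1 / (n + 1 : ℝ) ≤ m} = 0 := by
        have := hc (1 / (n + 1 : ℝ)) hn
        exact le_antisymm this zero_le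
      rw [ae_iff]
      convert h0 using 2
      ext m
      simp [not_lt]
    rw [← ae_all_iff] at hall
    filter_upwards [hF1, hall] with m hm1 hm2
    refine le_antisymm ?_ hm1
    by_contra hgt
    push_neg at hgt
    obtain ⟨n, hn⟩ := exists_nat_one_div_lt (show (0:ℝ) < m - 1 by linarith)
    exact absurd (hm2 n) (by push_neg; linarith)
  obtain ⟨ε, hε, hFs⟩ := hpos
  set s : Set ℝ := {m | 1 + ε ≤ m} with hs_def
  have hs_meas : MeasurableSet s := measurableSet_Ici
  have hs_fin : F s ≠ ⊤ := (measure_lt_top F s).ne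
  set c : ℝ := (F s).toReal with hc_def
  have hc_pos : 0 < c := ENNReal.toReal_pos hFs.ne' hs_fin
  set δ : ℝ := ε / (1 + ε) with hδ_def
  have hδ_pos : 0 < δ := by positivity
  have ha_s : ∀ m ∈ s, δ ≤ a m := by
    intro m hm
    have hm1 : 1 + ε ≤ m := hm
    have hm0 : (0:ℝ) < m := by linarith
    have h1 : m⁻¹ ≤ (1 + ε)⁻¹ := by
      apply inv_anti₀ (by linarith) hm1
    have h2 : a m = 1 - m⁻¹ := rfl
    have h3 : δ = 1 - (1 + ε)⁻¹ := by
      rw [hδ_def]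
      field_simp
      ring
    rw [h2, h3]; linarith
  -- h is eventually large
  have hlarge : ∃ t₁ : ℝ, 0 ≤ t₁ ∧ 1 / q ≤ h t₁ := by
    set t₁ : ℝ := max 0 (Real.log (1 / (q * c)) / δ) with ht₁_def
    refine ⟨t₁, le_max_left _ _, ?_⟩
    have ht₁0 : 0 ≤ t₁ := le_max_left _ _
    have hkey : Real.log (1 / (q * c)) ≤ t₁ * δ := by
      have := le_max_right 0 (Real.log (1 / (q * c)) / δ)
      calc Real.log (1 / (q * c)) = (Real.log (1 / (q * c)) / δ) * δ := by
            field_simp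
        _ ≤ t₁ * δ := mul_le_mul_of_nonneg_right this (le_of_lt hδ_pos)
    have hqc : (0:ℝ) < 1 / (q * c) := by positivity
    have hexp : 1 / (q * c) ≤ Real.exp (t₁ * δ) := by
      calc 1 / (q * c) = Real.exp (Real.log (1 / (q * c))) := (Real.exp_log hqc).symm
        _ ≤ Real.exp (t₁ * δ) := Real.exp_le_exp.mpr hkey
    have hlow : Real.exp (t₁ * δ) * c ≤ h t₁ := by
      have h1 : Real.exp (t₁ * δ) * c ≤ ∫ m in s, Real.exp (t₁ * a m) ∂F := by
        refine setIntegral_ge_of_const_le_real hs_meas hs_fin ?_ ((hint t₁).integrableOn)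
        intro m hm
        exact Real.exp_le_exp.mpr (mul_le_mul_of_nonneg_left (ha_s m hm) ht₁0)
      refine h1.trans ?_
      exact setIntegral_le_integral (hint t₁) (ae_of_all _ fun m => (Real.exp_pos _).le)
    calc 1 / q = (1 / (q * c)) * c := by field_simp
      _ ≤ Real.exp (t₁ * δ) * c := mul_le_mul_of_nonneg_right hexp hc_pos.le
      _ ≤ h t₁ := hlow
  obtain ⟨t₁, ht₁0, ht₁⟩ := hlarge
  -- strict monotonicity on [0, ∞)
  have hstrict : StrictMonoOn h (Ici 0) := by
    intro u hu v hv huv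
    have hdiff_int : Integrable (fun m => Real.exp (v * a m) - Real.exp (u * a m)) F :=
      (hint v).sub (hint u)
    have hdiff_nonneg : 0 ≤ᵐ[F] fun m => Real.exp (v * a m) - Real.exp (u * a m) := by
      filter_upwards [ha_ae] with m ⟨hm0, _⟩
      have : u * a m ≤ v * a m := mul_le_mul_of_nonneg_right huv.le hm0
      simp only [Pi.zero_apply, sub_nonneg]
      exact Real.exp_le_exp.mpr this
    have hc' : (0:ℝ) < Real.exp ((v - u) * δ) - 1 := by
      have hvu : (0:ℝ) < (v - u) * δ := mul_pos (by linarith) hδ_pos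
      have := Real.exp_lt_exp.mpr hvu
      rw [Real.exp_zero] at this
      linarith
    have hlower : ∀ m ∈ s, Real.exp ((v - u) * δ) - 1 ≤ Real.exp (v * a m) - Real.exp (u * a m) := by
      intro m hm
      have hδa := ha_s m hm
      have ha0 : 0 ≤ a m := le_trans hδ_pos.le hδa
      have h1 : Real.exp (v * a m) = Real.exp (u * a m) * Real.exp ((v - u) * a m) := by
        rw [← Real.exp_add]; ring_nf
      have h2 : (1:ℝ) ≤ Real.exp (u * a m) := by
        rw [← Real.exp_zero]
        exact Real.exp_le_exp.mpr (mul_nonneg hu ha0)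
      have h3 : Real.exp ((v - u) * δ) ≤ Real.exp ((v - u) * a m) :=
        Real.exp_le_exp.mpr (mul_le_mul_of_nonneg_left hδa (by linarith))
      rw [h1]
      nlinarith [Real.exp_pos ((v - u) * a m)]
    have hgap : 0 < h v - h u := by
      have h1 : h v - h u = ∫ m, (Real.exp (v * a m) - Real.exp (u * a m)) ∂F := by
        rw [hh_def, ← integral_sub (hint v) (hint u)]
      rw [h1]
      have h2 : (Real.exp ((v - u) * δ) - 1) * c ≤
          ∫ m in s, (Real.exp (v * a m) - Real.exp (u * a m)) ∂F :=
        setIntegral_ge_of_const_le_real hs_meas hs_fin hlower hdiff_int.integrableOn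
      have h3 := setIntegral_le_integral hdiff_int hdiff_nonneg (s := s)
      nlinarith
    linarith
  -- existence of the crossing point
  have h1q : (1:ℝ) < 1 / q := by
    rw [lt_div_iff₀ hq]; linarith
  have h1q' : h 0 ≤ 1 / q := by rw [hh0]; linarith
  obtain ⟨t₀, ht₀mem, ht₀⟩ : ∃ t₀ ∈ Icc 0 t₁, h t₀ = 1 / q := by
    have := intermediate_value_Icc ht₁0 hcont.continuousOn (a := 0) (b := t₁)
    have hmem : 1 / q ∈ Icc (h 0) (h t₁) := ⟨h1q', ht₁⟩
    obtain ⟨t₀, ht₀1, ht₀2⟩ := this hmem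
    exact ⟨t₀, ht₀1, ht₀2⟩
  have ht₀0 : 0 ≤ t₀ := ht₀mem.1
  -- uniqueness
  have huniq : ∀ t : ℝ, 0 ≤ t → h t = 1 / q → t = t₀ := by
    intro t ht hht
    exact hstrict.injOn ht ht₀0 (by rw [hht, ht₀])
  constructor
  · refine ⟨t₀, ⟨ht₀0, (heqv t₀ ht₀0).mpr ht₀⟩, ?_⟩
    intro t ⟨ht, hteq⟩
    exact huniq t ht ((heqv t ht).mp hteq)
  · intro t ht hteq
    have htt₀ : t = t₀ := huniq t ht ((heqv t ht).mp hteq)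
    subst htt₀
    -- the set is Ici t
    have hset : {u : ℝ | 0 ≤ u ∧ Real.exp (-u) / q ≤ 1 - mixCdf F u} = Ici t := by
      ext u
      simp only [mem_setOf_eq, mem_Ici]
      constructor
      · rintro ⟨hu0, hu⟩
        by_contra hlt
        push_neg at hlt
        have := hstrict hu0 ht₀0 hlt
        have h2 := (hineqv u hu0).mp hu
        rw [ht₀] at this
        linarith
      · intro hu
        have hu0 : 0 ≤ u := le_trans ht hu
        refine ⟨hu0, (hineqv u hu0).mpr ?_⟩
        rcases eq_or_lt_of_le hu with rfl | hlt
        · rw [ht₀]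
        · exact le_of_lt (ht₀ ▸ hstrict ht₀0 hu0 hlt)
    rw [Tq, hset]
    apply le_antisymm
    · exact sInf_le ⟨t, self_mem_Ici, rfl⟩
    · refine le_sInf ?_
      rintro x ⟨u, hu, rfl⟩
      exact ENNReal.ofReal_le_ofReal hu
end

section
/- Fix 0 < q < 1. For every G ∈ 𝒢 with G ≠ E, the FDR functional satisfies −log( (q/(1−q)) ‖G − E‖ ) ≤ T_q(G) ≤ ((1−q)/q) · 1/‖G − E‖, where ‖G − E‖ = sup_t |G(t) − E(t)| is the Kolmogorov–Smirnov distance. -/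
open MeasureTheory Filter Set
open scoped ENNReal

/-- The Kolmogorov–Smirnov distance `‖G − G'‖ = sup_t |G(t) − G'(t)|`. -/
noncomputable def ksDist (G G' : ℝ → ℝ) : ℝ := ⨆ t : ℝ, |G t - G' t|

section Aux

/-- Convexity bound: `e^{-t/m} - e^{-t} ≤ 1 - 1/m` for `t ≥ 0`, `m ≥ 1`. -/
lemma exp_div_sub_exp_le {t m : ℝ} (ht : 0 ≤ t) (hm : 1 ≤ m) :
    Real.exp (-t / m) - Real.exp (-t) ≤ 1 - 1 / m := by
  have hm0 : (0:ℝ) < m := lt_of_lt_of_le one_pos hm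
  have ha0 : (0:ℝ) ≤ 1 / m := by positivity
  have ha1 : 1 / m ≤ 1 := by
    rw [div_le_one hm0]; exact hm
  have hconv := convexOn_exp.2 (Set.mem_univ (-t)) (Set.mem_univ 0)
    ha0 (by linarith : (0:ℝ) ≤ 1 - 1/m) (by ring)
  simp only [smul_eq_mul, mul_zero, add_zero, Real.exp_zero, mul_one] at hconv
  have hrw : (1/m) * (-t) = -t / m := by ring
  rw [hrw] at hconv
  have he1 : Real.exp (-t) ≤ 1 := by
    rw [Real.exp_le_one_iff]; linarith
  nlinarith [Real.exp_pos (-t)]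

/-- Linear lower bound: `e^{-t/m} ≥ e^{-t} (1 + t (1 - 1/m))`. -/
lemma exp_div_ge {t m : ℝ} (hm : 1 ≤ m) :
    Real.exp (-t) * (1 + t * (1 - 1/m)) ≤ Real.exp (-t / m) := by
  have hm0 : (0:ℝ) < m := lt_of_lt_of_le one_pos hm
  have h1 : t * (1 - 1/m) + 1 ≤ Real.exp (t * (1 - 1/m)) := Real.add_one_le_exp _
  have h2 : Real.exp (-t / m) = Real.exp (-t) * Real.exp (t * (1 - 1/m)) := by
    rw [← Real.exp_add]; field_simp; ring
  rw [h2]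
  have := Real.exp_pos (-t)
  nlinarith

end Aux

/-- Lemma 4.4, boundedness: for `0 < q < 1` and `G ∈ 𝒢`, `G ≠ E`,
`−log((q/(1−q)) ‖G−E‖) ≤ T_q(G) ≤ ((1−q)/q) / ‖G−E‖`. -/
theorem Tq_bounds (q : ℝ) (hq : 0 < q) (hq1 : q < 1) (G : ℝ → ℝ)
    (hG : G ∈ scaleMixtures) (hne : G ≠ Ecdf) :
    ENNReal.ofReal (-Real.log (q / (1 - q) * ksDist G Ecdf)) ≤ Tq q G ∧
    Tq q G ≤ ENNReal.ofReal ((1 - q) / q / ksDist G Ecdf) := by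
  obtain ⟨F, ⟨hP, h1⟩, rfl⟩ := hG
  haveI := hP
  have hq1' : (0:ℝ) < 1 - q := by linarith
  -- measurability / integrability of the basic integrands
  have hmeas : ∀ t : ℝ, Measurable fun m : ℝ => Real.exp (-t / m) :=
    fun t => (measurable_const.div measurable_id).exp
  have hint : ∀ t : ℝ, 0 ≤ t → Integrable (fun m : ℝ => Real.exp (-t / m)) F := by
    intro t ht
    refine Integrable.mono' (integrable_const 1) (hmeas t).aestronglyMeasurable ?_
    filter_upwards [h1] with m hm
    have hm0 : (0:ℝ) < m := lt_of_lt_of_le one_pos hm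
    rw [Real.norm_eq_abs, abs_of_pos (Real.exp_pos _), Real.exp_le_one_iff]
    rw [div_nonpos_iff]
    right
    constructor <;> linarith
  have hintI : Integrable (fun m : ℝ => 1 - 1 / m) F := by
    refine Integrable.mono' (integrable_const 1) ?_ ?_
    · exact (measurable_const.sub (measurable_const.div measurable_id)).aestronglyMeasurable
    · filter_upwards [h1] with m hm
      have hm0 : (0:ℝ) < m := lt_of_lt_of_le one_pos hm
      have h01 : 0 < 1 / m := by positivity
      have h11 : 1 / m ≤ 1 := by rw [div_le_one hm0]; exact hm
      show ‖1 - 1 / m‖ ≤ 1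
      rw [Real.norm_eq_abs, abs_le]
      constructor <;> linarith
  -- the value of the mixture cdf
  have hGval : ∀ t : ℝ, 0 ≤ t → mixCdf F t = 1 - ∫ m, Real.exp (-t / m) ∂F := by
    intro t ht
    rw [mixCdf, if_pos ht, integral_sub (integrable_const 1) (hint t ht)]
    simp
  set I : ℝ := ∫ m, (1 - 1 / m) ∂F with hI
  -- pointwise: 0 ≤ E - G ≤ I
  have hI0 : 0 ≤ I := by
    refine integral_nonneg_of_ae ?_
    filter_upwards [h1] with m hm
    have hm0 : (0:ℝ) < m := lt_of_lt_of_le one_pos hm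
    have : 1 / m ≤ 1 := by rw [div_le_one hm0]; exact hm
    show (0:ℝ) ≤ 1 - 1 / m
    linarith
  have hdiff : ∀ t : ℝ, 0 ≤ t →
      Ecdf t - mixCdf F t = ∫ m, (Real.exp (-t / m) - Real.exp (-t)) ∂F := by
    intro t ht
    rw [hGval t ht, Ecdf, if_pos ht,
      integral_sub (hint t ht) (integrable_const _), integral_const]
    simp
    try ring
  have hnonneg : ∀ t : ℝ, 0 ≤ Ecdf t - mixCdf F t := by
    intro t
    rcases le_or_gt 0 t with ht | ht
    · rw [hdiff t ht]
      refine integral_nonneg_of_ae ?_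
      filter_upwards [h1] with m hm
      show (0:ℝ) ≤ Real.exp (-t / m) - Real.exp (-t)
      have hm0 : (0:ℝ) < m := lt_of_lt_of_le one_pos hm
      have : -t ≤ -t / m := by
        rw [neg_div, neg_le_neg_iff]
        exact div_le_self ht hm
      simp [Real.exp_le_exp.mpr this]
    · rw [Ecdf, mixCdf, if_neg (not_le.mpr ht), if_neg (not_le.mpr ht)]
      simp
  have hIbd : ∀ t : ℝ, Ecdf t - mixCdf F t ≤ I := by
    intro t
    rcases le_or_gt 0 t with ht | ht
    · rw [hdiff t ht]
      refine integral_mono_ae ?_ hintI ?_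
      · exact ((hint t ht).sub (integrable_const _))
      · filter_upwards [h1] with m hm
        exact exp_div_sub_exp_le ht hm
    · rw [Ecdf, mixCdf, if_neg (not_le.mpr ht), if_neg (not_le.mpr ht)]
      simpa using hI0
  have habs : ∀ t : ℝ, |mixCdf F t - Ecdf t| = Ecdf t - mixCdf F t := by
    intro t
    rw [abs_of_nonpos (by linarith [hnonneg t]), neg_sub]
  have hbdd : BddAbove (Set.range fun t : ℝ => |mixCdf F t - Ecdf t|) := by
    refine ⟨I, ?_⟩
    rintro x ⟨t, rfl⟩
    show |mixCdf F t - Ecdf t| ≤ I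
    rw [habs t]; exact hIbd t
  set δ : ℝ := ksDist (mixCdf F) Ecdf with hδ
  have hδ_le : ∀ t : ℝ, Ecdf t - mixCdf F t ≤ δ := by
    intro t
    rw [← habs t]
    exact le_ciSup hbdd t
  have hδI : δ ≤ I := by
    refine ciSup_le fun t => ?_
    show |mixCdf F t - Ecdf t| ≤ I
    rw [habs t]; exact hIbd t
  have hδpos : 0 < δ := by
    have : ∃ t : ℝ, mixCdf F t ≠ Ecdf t := by
      by_contra h
      push_neg at h
      exact hne (funext h)
    obtain ⟨t₀, ht₀⟩ := this
    have h2 : 0 < |mixCdf F t₀ - Ecdf t₀| := abs_pos.mpr (sub_ne_zero.mpr ht₀)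
    calc (0:ℝ) < |mixCdf F t₀ - Ecdf t₀| := h2
      _ ≤ δ := le_ciSup hbdd t₀
  constructor
  · -- lower bound
    refine le_sInf ?_
    rintro b ⟨t, ⟨ht0, hts⟩, rfl⟩
    refine ENNReal.ofReal_le_ofReal ?_
    have hx : 0 < q / (1 - q) * δ := by positivity
    rw [neg_le, Real.le_log_iff_exp_le hx]
    -- need exp(-t) ≤ q/(1-q) * δ
    have hEt : Ecdf t = 1 - Real.exp (-t) := by rw [Ecdf, if_pos ht0]
    have h3 : Real.exp (-t) * (1 - q) / q ≤ δ := by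
      have h4 : Real.exp (-t) / q - Real.exp (-t) ≤ Ecdf t - mixCdf F t := by
        rw [hEt]; linarith
      have h5 := (h4.trans (hδ_le t))
      have : Real.exp (-t) * (1 - q) / q = Real.exp (-t) / q - Real.exp (-t) := by
        field_simp
      linarith [this ▸ h5]
    rw [div_mul_eq_mul_div, le_div_iff₀ hq1']
    calc Real.exp (-t) * (1 - q) = (Real.exp (-t) * (1 - q) / q) * q := by field_simp
      _ ≤ δ * q := by
        have := h3
        nlinarith
      _ = q * δ := by ring
  · -- upper bound
    set t' : ℝ := (1 - q) / q / δ with ht'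
    have ht'pos : 0 < t' := by positivity
    have hmem : Real.exp (-t') / q ≤ 1 - mixCdf F t' := by
      rw [hGval t' ht'pos.le, sub_sub_cancel]
      by_contra hcon
      push_neg at hcon
      have hcon' : ∫ m, Real.exp (-t' / m) ∂F < Real.exp (-t') / q := hcon
      -- lower bound for the integral
      have hlb : Real.exp (-t') * (1 + t' * I) ≤ ∫ m, Real.exp (-t' / m) ∂F := by
        have : ∫ m, (Real.exp (-t') * (1 + t' * (1 - 1/m))) ∂F
            = Real.exp (-t') * (1 + t' * I) := by
          have heq : (fun m : ℝ => Real.exp (-t') * (1 + t' * (1 - 1/m)))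
              = fun m : ℝ => Real.exp (-t') + (Real.exp (-t') * t') * (1 - 1/m) := by
            funext m; ring
          rw [heq, integral_add (integrable_const _) (hintI.const_mul _),
            integral_const, integral_const_mul, probReal_univ, one_smul]
          ring
        rw [← this]
        refine integral_mono_ae ?_ (hint t' ht'pos.le) ?_
        · have : Integrable (fun m : ℝ => Real.exp (-t') + (Real.exp (-t') * t') * (1 - 1/m)) F :=
            (integrable_const _).add (hintI.const_mul _)
          refine this.congr ?_
          filter_upwards with m
          ring
        · filter_upwards [h1] with m hm
          exact exp_div_ge hm
      have hIlt : I < δ := by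
        have h6 : Real.exp (-t') * (1 + t' * I) < Real.exp (-t') * q⁻¹ := by
          rw [← div_eq_mul_inv]; exact lt_of_le_of_lt hlb hcon'
        have hexp := Real.exp_pos (-t')
        have h7 : 1 + t' * I < q⁻¹ := (mul_lt_mul_iff_right₀ hexp).mp h6
        have hq' : q⁻¹ - 1 = (1 - q) / q := by field_simp
        have h8 : t' * I < (1 - q) / q := by linarith [hq' ▸ (by linarith : t' * I < q⁻¹ - 1)]
        have h9 : t' * δ = (1 - q) / q := by
          rw [ht', div_mul_cancel₀ _ (ne_of_gt hδpos)]
        have h10 : t' * I < t' * δ := by rw [h9]; exact h8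
        exact (mul_lt_mul_iff_right₀ ht'pos).mp h10
      linarith [hδI]
    have : ENNReal.ofReal t' ∈
        ENNReal.ofReal '' {t : ℝ | 0 ≤ t ∧ Real.exp (-t) / q ≤ 1 - mixCdf F t} :=
      ⟨t', ⟨ht'pos.le, hmem⟩, rfl⟩
    exact sInf_le this
end

section
/- Fix 0 < q < 1 and t_0 > log(1/q). Define the modulus of continuity ω*(ε; t_0) = sup{ |T_q(G′) − t_0| : G ∈ 𝒢 with T_q(G) = t_0, G′ a cdf on [0,∞) with ‖G − G′‖ ≤ ε }, where ‖·‖ denotes the Kolmogorov–Smirnov (sup-norm) distance. Then ω*(ε; t_0) ≤ (q/log(1/q)) · t_0 e^{t_0} · ε · (1 + o(1)) as ε → 0+. -/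
open MeasureTheory Filter Set
open scoped ENNReal

/-- A cdf of a distribution on `[0,∞)`. -/
def IsCdfOnNonneg (G : ℝ → ℝ) : Prop :=
  Monotone G ∧ (∀ t < 0, G t = 0) ∧ Tendsto G atTop (nhds 1)

/-- The modulus of continuity
`ω*(ε; t₀) = sup {|T_q(G') − t₀| : G ∈ 𝒢, T_q(G) = t₀, ‖G − G'‖ ≤ ε}`
(the absolute difference taken in `ℝ≥0∞` via truncated subtraction). -/
noncomputable def omegaStar (q t₀ ε : ℝ) : ℝ≥0∞ :=
  ⨆ P : {P : (ℝ → ℝ) × (ℝ → ℝ) //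
      P.1 ∈ scaleMixtures ∧ Tq q P.1 = ENNReal.ofReal t₀ ∧
      IsCdfOnNonneg P.2 ∧ ksDist P.1 P.2 ≤ ε},
    (Tq q P.1.2 - ENNReal.ofReal t₀) ⊔ (ENNReal.ofReal t₀ - Tq q P.1.2)

lemma exp_neg_le_quad (x : ℝ) (hx : 0 ≤ x) : Real.exp (-x) ≤ 1 - x + x^2 := by
  have key : Real.exp (-x) * Real.exp x = 1 := by rw [← Real.exp_add]; simp
  nlinarith [Real.add_one_le_exp x, Real.exp_pos (-x), mul_nonneg (mul_nonneg hx hx) hx,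
    mul_nonneg (Real.exp_pos (-x)).le hx]

lemma tangent_ineq {y y₀ c : ℝ} (hy : 0 < y) (hy₀ : 0 < y₀) :
    y₀*(c + Real.log y₀) + (c + Real.log y₀ + 1)*(y - y₀) ≤ y*(c + Real.log y) := by
  have h := Real.log_le_sub_one_of_pos (show 0 < y₀ / y by positivity)
  rw [Real.log_div hy₀.ne' hy.ne'] at h
  have h2 := mul_le_mul_of_nonneg_left h hy.le
  have h3 : y * (y₀ / y) = y₀ := by field_simp
  nlinarith

lemma abs_exp_neg_sub_le {u v : ℝ} (hu : 0 ≤ u) (hv : 0 ≤ v) :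
    |Real.exp (-u) - Real.exp (-v)| ≤ |u - v| := by
  wlog h : v ≤ u generalizing u v
  · rw [abs_sub_comm, abs_sub_comm u v]; exact this hv hu (le_of_not_ge h)
  have h1 : Real.exp (-u) ≤ Real.exp (-v) := Real.exp_le_exp.2 (by linarith)
  rw [abs_of_nonpos (by linarith), abs_of_nonneg (by linarith)]
  have h2 : Real.exp (-v) * Real.exp (v - u) = Real.exp (-u) := by
    rw [← Real.exp_add]; ring_nf
  have h3 : Real.exp (-v) ≤ 1 := Real.exp_le_one_iff.2 (by linarith)
  nlinarith [Real.add_one_le_exp (v - u), Real.exp_pos (-v), Real.exp_pos (v - u)]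

set_option maxHeartbeats 1000000 in
lemma key_bounds (q t₀ : ℝ) (hq : 0 < q) (hq1 : q < 1) (ht₀ : Real.log (1/q) < t₀)
    (F : Measure ℝ) (hFp : IsProbabilityMeasure F) (hF1 : ∀ᵐ m ∂F, 1 ≤ m)
    (hT : Tq q (mixCdf F) = ENNReal.ofReal t₀)
    (G' : ℝ → ℝ) (hG' : IsCdfOnNonneg G') (ε δ : ℝ) (hε : 0 < ε)
    (hks : ksDist (mixCdf F) G' ≤ ε)
    (hδt : δ ≤ t₀)
    (h1 : q * Real.exp (t₀ + δ) * ε ≤ δ * Real.log (1/q) / t₀)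
    (h2 : q * Real.exp t₀ * ε ≤ δ * Real.log (1/q) / t₀ - δ^2) :
    ENNReal.ofReal (t₀ - δ) ≤ Tq q G' ∧ Tq q G' ≤ ENNReal.ofReal (t₀ + δ) := by
  haveI := hFp
  set L := Real.log (1/q) with hLdef
  have hL : 0 < L := Real.log_pos (by rw [lt_div_iff₀ hq]; linarith)
  have ht₀pos : 0 < t₀ := lt_trans hL ht₀
  have hδpos : 0 < δ := by
    by_contra hcon
    push_neg at hcon
    have hA : δ * L / t₀ ≤ 0 := by
      apply div_nonpos_of_nonpos_of_nonneg _ ht₀pos.le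
      exact mul_nonpos_of_nonpos_of_nonneg hcon hL.le
    nlinarith [mul_pos (mul_pos hq (Real.exp_pos t₀)) hε, sq_nonneg δ]
  -- basic measurability and integrability
  have hmeas : ∀ t : ℝ, AEStronglyMeasurable (fun m : ℝ => Real.exp (-t/m)) F :=
    fun t => (Real.measurable_exp.comp (measurable_const.div measurable_id)).aestronglyMeasurable
  have hIntgr : ∀ t : ℝ, 0 ≤ t → Integrable (fun m : ℝ => Real.exp (-t/m)) F := by
    intro t ht
    refine Integrable.mono' (integrable_const 1) (hmeas t) ?_
    filter_upwards [hF1] with m hm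
    rw [Real.norm_eq_abs, abs_of_pos (Real.exp_pos _)]
    refine Real.exp_le_one_iff.2 ?_
    have : 0 ≤ t / m := div_nonneg ht (by linarith)
    simp only [neg_div]
    linarith
  set I : ℝ → ℝ := fun t => ∫ m, Real.exp (-t/m) ∂F with hIdef
  have hInt_affine : ∀ (c₁ c₂ t : ℝ), 0 ≤ t →
      ∫ m, (c₁ + c₂ * Real.exp (-t/m)) ∂F = c₁ + c₂ * I t := by
    intro c₁ c₂ t ht
    rw [integral_add (integrable_const _) ((hIntgr t ht).const_mul c₂),
      integral_const_mul, integral_const]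
    simp [hIdef]
  have hI0 : I 0 = 1 := by
    simp only [hIdef]
    rw [show (fun m : ℝ => Real.exp (-0/m)) = fun _ : ℝ => (1:ℝ) by funext m; simp]
    simp
  have hInonneg : ∀ t, 0 ≤ I t := fun t => integral_nonneg (fun m => (Real.exp_pos _).le)
  have hIle1 : ∀ t, 0 ≤ t → I t ≤ 1 := by
    intro t ht
    calc I t ≤ ∫ _, (1:ℝ) ∂F := by
          refine integral_mono_ae (hIntgr t ht) (integrable_const 1) ?_
          filter_upwards [hF1] with m hm
          refine Real.exp_le_one_iff.2 ?_
          have : 0 ≤ t / m := div_nonneg ht (by linarith)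
          simp only [neg_div]; linarith
      _ = 1 := by simp
  have hGval : ∀ t : ℝ, 0 ≤ t → mixCdf F t = 1 - I t := by
    intro t ht
    simp only [mixCdf, if_pos ht]
    rw [integral_sub (integrable_const 1) (hIntgr t ht), integral_const]
    simp [hIdef]
  -- Lipschitz-type bound for I on nonnegatives
  have hIdiff : ∀ s t : ℝ, 0 ≤ s → 0 ≤ t → |I t - I s| ≤ |t - s| := by
    intro s t hs ht
    have hsub : I t - I s = ∫ m, (Real.exp (-t/m) - Real.exp (-s/m)) ∂F := by
      rw [integral_sub (hIntgr t ht) (hIntgr s hs)]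
    rw [hsub]
    calc |∫ m, (Real.exp (-t/m) - Real.exp (-s/m)) ∂F|
        ≤ ∫ m, |Real.exp (-t/m) - Real.exp (-s/m)| ∂F := by
          simpa [Real.norm_eq_abs] using
            norm_integral_le_integral_norm (fun m : ℝ => Real.exp (-t/m) - Real.exp (-s/m)) (μ := F)
      _ ≤ ∫ _, |t - s| ∂F := by
          refine integral_mono_ae ((hIntgr t ht).sub (hIntgr s hs)).abs (integrable_const _) ?_
          filter_upwards [hF1] with m hm
          have hm0 : 0 < m := by linarith
          have e1 : -t/m = -(t/m) := by ring
          have e2 : -s/m = -(s/m) := by ring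
          rw [e1, e2]
          refine le_trans (abs_exp_neg_sub_le (div_nonneg ht hm0.le) (div_nonneg hs hm0.le)) ?_
          rw [div_sub_div_same, abs_div, abs_of_pos hm0]
          exact div_le_self (abs_nonneg _) hm
      _ = |t - s| := by simp
  -- continuity of truncated I
  have hJcont : Continuous (fun t : ℝ => I (max t 0)) := by
    have : LipschitzWith 1 (fun t : ℝ => I (max t 0)) := by
      refine LipschitzWith.of_dist_le_mul ?_
      intro x y
      rw [Real.dist_eq, Real.dist_eq, NNReal.coe_one, one_mul]
      refine le_trans (hIdiff (max y 0) (max x 0) (le_max_right _ _) (le_max_right _ _)) ?_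
      exact abs_max_sub_max_le_abs _ _ _
    exact this.continuous
  -- the set defining Tq for the mixture
  set S : Set ℝ := {t : ℝ | 0 ≤ t ∧ Real.exp (-t) / q ≤ 1 - mixCdf F t} with hSdef
  have hSeq : S = {t : ℝ | 0 ≤ t ∧ Real.exp (-t) / q ≤ I t} := by
    ext t
    simp only [hSdef, mem_setOf_eq]
    constructor
    · rintro ⟨h0, hc⟩; exact ⟨h0, by rwa [hGval t h0, sub_sub_cancel] at hc⟩
    · rintro ⟨h0, hc⟩; exact ⟨h0, by rw [hGval t h0, sub_sub_cancel]; exact hc⟩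
  have hSclosed : IsClosed S := by
    rw [hSeq]
    have : {t : ℝ | 0 ≤ t ∧ Real.exp (-t) / q ≤ I t}
        = Ici 0 ∩ {t : ℝ | Real.exp (-t) / q ≤ I (max t 0)} := by
      ext t
      simp only [mem_setOf_eq, mem_inter_iff, mem_Ici]
      constructor
      · rintro ⟨h0, hc⟩; exact ⟨h0, by rwa [max_eq_left h0]⟩
      · rintro ⟨h0, hc⟩; exact ⟨h0, by rwa [max_eq_left h0] at hc⟩
    rw [this]
    exact isClosed_Ici.inter
      (isClosed_le ((Real.continuous_exp.comp continuous_neg).div_const q) hJcont)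
  have hTS : Tq q (mixCdf F) = sInf (ENNReal.ofReal '' S) := rfl
  have hSne : S.Nonempty := by
    rcases Set.eq_empty_or_nonempty S with h | h
    · rw [hTS, h] at hT
      simp at hT
    · exact h
  have hSbdd : BddBelow S := ⟨0, fun t ht => ht.1⟩
  have hcmem : sInf S ∈ S := hSclosed.csInf_mem hSne hSbdd
  have hval : sInf (ENNReal.ofReal '' S) = ENNReal.ofReal (sInf S) := by
    refine le_antisymm (sInf_le ⟨sInf S, hcmem, rfl⟩) (le_sInf ?_)
    rintro x ⟨t, htS, rfl⟩
    exact ENNReal.ofReal_le_ofReal (csInf_le hSbdd htS)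
  have hct₀ : sInf S = t₀ := by
    rw [hTS, hval] at hT
    exact (ENNReal.ofReal_eq_ofReal_iff hcmem.1 ht₀pos.le).1 hT
  have ht₀S : t₀ ∈ S := hct₀ ▸ hcmem
  have hIt₀_ge : Real.exp (-t₀) / q ≤ I t₀ := by
    rw [hSeq] at ht₀S; exact ht₀S.2
  have hlt : ∀ t : ℝ, 0 ≤ t → t < t₀ → I t < Real.exp (-t) / q := by
    intro t h0 htlt
    by_contra hcon
    push_neg at hcon
    have htS : t ∈ S := by rw [hSeq]; exact ⟨h0, hcon⟩
    have := csInf_le hSbdd htS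
    rw [hct₀] at this
    linarith
  have hIt₀_le : I t₀ ≤ Real.exp (-t₀) / q := by
    have htend : Tendsto (fun t : ℝ => Real.exp (-t) / q + (t₀ - t)) (nhdsWithin t₀ (Iio t₀))
        (nhds (Real.exp (-t₀) / q)) := by
      have hc : Continuous (fun t : ℝ => Real.exp (-t) / q + (t₀ - t)) :=
        ((Real.continuous_exp.comp continuous_neg).div_const q).add
          (continuous_const.sub continuous_id)
      have h0 : Tendsto (fun t : ℝ => Real.exp (-t) / q + (t₀ - t)) (nhds t₀)
          (nhds (Real.exp (-t₀) / q + (t₀ - t₀))) := hc.tendsto t₀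
      simp only [sub_self, add_zero] at h0
      exact h0.mono_left nhdsWithin_le_nhds
    refine ge_of_tendsto htend ?_
    have hmem : Ico 0 t₀ ∈ nhdsWithin t₀ (Iio t₀) :=
      Ico_mem_nhdsLT_of_mem ⟨ht₀pos, le_refl t₀⟩
    filter_upwards [hmem] with t ht
    have hd := (abs_le.1 (hIdiff t t₀ ht.1 ht₀pos.le)).2
    rw [abs_of_nonneg (by linarith [ht.2] : (0:ℝ) ≤ t₀ - t)] at hd
    have := hlt t ht.1 ht.2
    linarith
  have hIt₀ : I t₀ = Real.exp (-t₀) / q := le_antisymm hIt₀_le hIt₀_ge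
  -- monotonicity of t ↦ e^t I t
  have hmono : ∀ s t : ℝ, 0 ≤ s → s ≤ t → Real.exp s * I s ≤ Real.exp t * I t := by
    intro s t hs hst
    have ht : 0 ≤ t := le_trans hs hst
    have e1 : ∀ u : ℝ, 0 ≤ u → Real.exp u * I u = ∫ m, Real.exp u * Real.exp (-u/m) ∂F := by
      intro u hu
      rw [integral_const_mul]
    rw [e1 s hs, e1 t ht]
    refine integral_mono_ae ((hIntgr s hs).const_mul _) ((hIntgr t ht).const_mul _) ?_
    filter_upwards [hF1] with m hm
    have hm0 : 0 < m := by linarith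
    rw [← Real.exp_add, ← Real.exp_add]
    refine Real.exp_le_exp.2 ?_
    have e2 : s + -s/m = s * (1 - 1/m) := by field_simp; ring
    have e3 : t + -t/m = t * (1 - 1/m) := by field_simp; ring
    rw [e2, e3]
    have h1m : 0 ≤ 1 - 1/m := by
      have : 1/m ≤ 1 := by rw [div_le_one hm0]; exact hm
      linarith
    exact mul_le_mul_of_nonneg_right hst h1m
  have hy₀pos : 0 < Real.exp (-t₀)/q := by positivity
  have hlogy₀ : t₀ + Real.log (Real.exp (-t₀)/q) = L := by
    rw [Real.log_div (Real.exp_pos _).ne' hq.ne', Real.log_exp, hLdef,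
      Real.log_div one_ne_zero hq.ne', Real.log_one]
    ring
  -- the first integrated inequality
  have hF1' : Real.exp (-δ) * (Real.exp (-t₀)/q * (1 + δ * L / t₀)) ≤ I (t₀ + δ) := by
    set c₂ : ℝ := Real.exp (-δ)*(1 + (δ/t₀)*(L+1)) with hc₂def
    set c₁ : ℝ := Real.exp (-δ)*((δ/t₀)*((Real.exp (-t₀)/q)*L) - (δ/t₀)*(L+1)*(Real.exp (-t₀)/q))
      with hc₁def
    have hpt : ∀ᵐ m ∂F, c₁ + c₂ * Real.exp (-t₀/m) ≤ Real.exp (-(t₀+δ)/m) := by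
      filter_upwards [hF1] with m hm
      have hm0 : 0 < m := by linarith
      set y := Real.exp (-t₀/m) with hydef
      have hy : 0 < y := Real.exp_pos _
      have hlogy : Real.log y = -t₀/m := Real.log_exp _
      have e1 : Real.exp (-(t₀+δ)/m) = Real.exp (-δ) * (y * Real.exp (δ*(1-1/m))) := by
        rw [hydef, ← Real.exp_add, ← Real.exp_add]
        congr 1
        field_simp
        ring
      have e2 : 1 + δ*(1-1/m) ≤ Real.exp (δ*(1-1/m)) := by
        linarith [Real.add_one_le_exp (δ*(1-1/m))]
      have e3 : y * (δ*(1-1/m)) = (δ/t₀) * (y * (t₀ + Real.log y)) := by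
        rw [hlogy]; field_simp; ring
      have e4 : (Real.exp (-t₀)/q)*L + (L+1)*(y - Real.exp (-t₀)/q) ≤ y*(t₀ + Real.log y) := by
        have ht := tangent_ineq (c := t₀) hy hy₀pos
        rw [hlogy₀] at ht
        exact ht
      calc c₁ + c₂ * y
          = Real.exp (-δ) * (y + (δ/t₀)*((Real.exp (-t₀)/q)*L + (L+1)*(y - Real.exp (-t₀)/q))) := by
            rw [hc₁def, hc₂def]; ring
        _ ≤ Real.exp (-δ) * (y + (δ/t₀)*(y*(t₀ + Real.log y))) := by gcongr
        _ = Real.exp (-δ) * (y * (1 + δ*(1-1/m))) := by rw [← e3]; ring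
        _ ≤ Real.exp (-δ) * (y * Real.exp (δ*(1-1/m))) := by gcongr
        _ = Real.exp (-(t₀+δ)/m) := e1.symm
    have hle : ∫ m, (c₁ + c₂ * Real.exp (-t₀/m)) ∂F ≤ I (t₀+δ) :=
      integral_mono_ae ((integrable_const c₁).add ((hIntgr t₀ ht₀pos.le).const_mul c₂))
        (hIntgr _ (by positivity)) hpt
    rw [hInt_affine c₁ c₂ t₀ ht₀pos.le, hIt₀] at hle
    refine le_trans (le_of_eq ?_) hle
    rw [hc₁def, hc₂def]; ring
  -- the second integrated inequality
  have hF2' : I (t₀ - δ) ≤ Real.exp δ * (Real.exp (-t₀)/q * (1 + δ^2 - δ*L/t₀)) := by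
    set d₂ : ℝ := Real.exp δ * (1 + δ^2 - (δ/t₀)*(L+1)) with hd₂def
    set d₁ : ℝ := Real.exp δ * ((δ/t₀)*(L+1)*(Real.exp (-t₀)/q) - (δ/t₀)*((Real.exp (-t₀)/q)*L))
      with hd₁def
    have hpt : ∀ᵐ m ∂F, Real.exp (-(t₀-δ)/m) ≤ d₁ + d₂ * Real.exp (-t₀/m) := by
      filter_upwards [hF1] with m hm
      have hm0 : 0 < m := by linarith
      set y := Real.exp (-t₀/m) with hydef
      have hy : 0 < y := Real.exp_pos _
      have hlogy : Real.log y = -t₀/m := Real.log_exp _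
      have ham : 0 ≤ 1 - 1/m := by
        have : 1/m ≤ 1 := by rw [div_le_one hm0]; exact hm
        linarith
      have ham1 : 1 - 1/m ≤ 1 := by
        have : 0 < 1/m := by positivity
        linarith
      have e1 : Real.exp (-(t₀-δ)/m) = Real.exp δ * (y * Real.exp (-(δ*(1-1/m)))) := by
        rw [hydef, ← Real.exp_add, ← Real.exp_add]
        congr 1
        field_simp
        ring
      have e2 : Real.exp (-(δ*(1-1/m))) ≤ 1 - δ*(1-1/m) + (δ*(1-1/m))^2 :=
        exp_neg_le_quad _ (mul_nonneg hδpos.le ham)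
      have e5 : (δ*(1-1/m))^2 ≤ δ^2 := by
        rw [mul_pow]
        have h8 : (1-1/m)^2 ≤ 1 := by
          have := pow_le_one₀ ham ham1 (n := 2)
          simpa using this
        calc δ^2 * (1-1/m)^2 ≤ δ^2 * 1 := by
              exact mul_le_mul_of_nonneg_left h8 (sq_nonneg δ)
          _ = δ^2 := mul_one _
      have e3 : y * (δ*(1-1/m)) = (δ/t₀) * (y * (t₀ + Real.log y)) := by
        rw [hlogy]; field_simp; ring
      have e4 : (Real.exp (-t₀)/q)*L + (L+1)*(y - Real.exp (-t₀)/q) ≤ y*(t₀ + Real.log y) := by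
        have ht := tangent_ineq (c := t₀) hy hy₀pos
        rw [hlogy₀] at ht
        exact ht
      have step1 : y * Real.exp (-(δ*(1-1/m))) ≤ y * (1 - δ*(1-1/m) + δ^2) := by
        have : Real.exp (-(δ*(1-1/m))) ≤ 1 - δ*(1-1/m) + δ^2 := le_trans e2 (by linarith)
        exact mul_le_mul_of_nonneg_left this hy.le
      have step2 : y * (1 - δ*(1-1/m) + δ^2)
          ≤ y + y*δ^2 - (δ/t₀)*((Real.exp (-t₀)/q)*L + (L+1)*(y - Real.exp (-t₀)/q)) := by
        have h6 : (δ/t₀)*((Real.exp (-t₀)/q)*L + (L+1)*(y - Real.exp (-t₀)/q))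
            ≤ (δ/t₀)*(y*(t₀ + Real.log y)) :=
          mul_le_mul_of_nonneg_left e4 (by positivity)
        have h7 : (δ/t₀)*(y*(t₀ + Real.log y)) = y * (δ*(1-1/m)) := e3.symm
        have h9 : y * (1 - δ*(1-1/m) + δ^2) = y + y*δ^2 - y*(δ*(1-1/m)) := by ring
        linarith
      calc Real.exp (-(t₀-δ)/m)
          = Real.exp δ * (y * Real.exp (-(δ*(1-1/m)))) := e1
        _ ≤ Real.exp δ * (y + y*δ^2
              - (δ/t₀)*((Real.exp (-t₀)/q)*L + (L+1)*(y - Real.exp (-t₀)/q))) := by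
            have := le_trans step1 step2
            exact mul_le_mul_of_nonneg_left this (Real.exp_pos δ).le
        _ = d₁ + d₂ * y := by rw [hd₁def, hd₂def]; ring
    have hle : I (t₀-δ) ≤ ∫ m, (d₁ + d₂ * Real.exp (-t₀/m)) ∂F :=
      integral_mono_ae (hIntgr _ (by linarith))
        ((integrable_const d₁).add ((hIntgr t₀ ht₀pos.le).const_mul d₂)) hpt
    rw [hInt_affine d₁ d₂ t₀ ht₀pos.le, hIt₀] at hle
    refine le_trans hle (le_of_eq ?_)
    rw [hd₁def, hd₂def]; ring
  -- cdf bounds and pointwise KS distance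
  have hG'le1 : ∀ t, G' t ≤ 1 := hG'.1.ge_of_tendsto hG'.2.2
  have hG'nonneg : ∀ t, 0 ≤ G' t := by
    intro t
    rcases lt_or_ge t 0 with h | h
    · rw [hG'.2.1 t h]
    · calc (0:ℝ) = G' (-1) := (hG'.2.1 (-1) (by norm_num)).symm
        _ ≤ G' t := hG'.1 (by linarith)
  have hG01 : ∀ t, 0 ≤ mixCdf F t ∧ mixCdf F t ≤ 1 := by
    intro t
    rcases le_or_gt 0 t with h | h
    · rw [hGval t h]
      exact ⟨by linarith [hIle1 t h], by linarith [hInonneg t]⟩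
    · rw [show mixCdf F t = 0 from by simp [mixCdf, not_le.2 h]]
      norm_num
  have hksbdd : BddAbove (Set.range fun t => |mixCdf F t - G' t|) := by
    refine ⟨2, ?_⟩
    rintro x ⟨t, rfl⟩
    have h1' := hG01 t
    have h2' := hG'nonneg t
    have h3' := hG'le1 t
    rw [abs_le]
    constructor <;> linarith [h1'.1, h1'.2]
  have hks' : ∀ t, |mixCdf F t - G' t| ≤ ε := fun t => le_trans (le_ciSup hksbdd t) hks
  -- upper bound on Tq q G'
  have hexp1 : Real.exp (t₀+δ) * Real.exp (-(t₀+δ)) = 1 := by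
    rw [← Real.exp_add, show t₀ + δ + -(t₀+δ) = 0 by ring, Real.exp_zero]
  have hup : Real.exp (-(t₀+δ)) / q ≤ 1 - G' (t₀+δ) := by
    have hGv := hGval (t₀+δ) (by positivity)
    have hε1 : ε ≤ Real.exp (-(t₀+δ))/q * (δ*L/t₀) := by
      have hpos : (0:ℝ) < Real.exp (-(t₀+δ))/q := by positivity
      have h10 := mul_le_mul_of_nonneg_right h1 hpos.le
      have h11 : q * Real.exp (t₀+δ) * ε * (Real.exp (-(t₀+δ))/q) = ε := by
        rw [show q * Real.exp (t₀+δ) * ε * (Real.exp (-(t₀+δ))/q)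
            = (Real.exp (t₀+δ) * Real.exp (-(t₀+δ))) * ε * (q/q) by ring,
          hexp1, div_self hq.ne']
        ring
      rw [h11] at h10
      linarith [h10, (by ring : δ*L/t₀ * (Real.exp (-(t₀+δ))/q)
        = Real.exp (-(t₀+δ))/q * (δ*L/t₀))]
    have hexpand : Real.exp (-δ) * (Real.exp (-t₀)/q * (1 + δ*L/t₀))
        = Real.exp (-(t₀+δ))/q + Real.exp (-(t₀+δ))/q * (δ*L/t₀) := by
      rw [show Real.exp (-(t₀+δ)) = Real.exp (-δ) * Real.exp (-t₀) from by
        rw [← Real.exp_add]; congr 1; ring]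
      ring
    have hF1'' : Real.exp (-(t₀+δ))/q + Real.exp (-(t₀+δ))/q * (δ*L/t₀) ≤ I (t₀+δ) := by
      rw [← hexpand]; exact hF1'
    have hG'b : I (t₀+δ) - ε ≤ 1 - G' (t₀+δ) := by
      have h12 := (abs_le.1 (hks' (t₀+δ))).1
      rw [hGv] at h12
      linarith
    linarith
  have hTupper : Tq q G' ≤ ENNReal.ofReal (t₀+δ) := by
    simp only [Tq]
    exact sInf_le ⟨t₀+δ, ⟨by positivity, hup⟩, rfl⟩
  -- lower bound on Tq q G'
  have hTlower : ENNReal.ofReal (t₀-δ) ≤ Tq q G' := by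
    simp only [Tq]
    refine le_sInf ?_
    rintro x ⟨t, ⟨ht0, hcond⟩, rfl⟩
    refine ENNReal.ofReal_le_ofReal ?_
    by_contra hcon
    push_neg at hcon
    have hIt : Real.exp t * I t ≤ Real.exp (t₀-δ) * I (t₀-δ) := hmono t (t₀-δ) ht0 (by linarith)
    have hprod : Real.exp (t₀-δ) * (Real.exp δ * Real.exp (-t₀)) = 1 := by
      rw [← Real.exp_add, ← Real.exp_add, show t₀ - δ + (δ + -t₀) = 0 by ring, Real.exp_zero]
    set B : ℝ := 1 + δ^2 - δ*L/t₀ with hBdef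
    have h6 : Real.exp t * I t ≤ B / q := by
      have h5 := mul_le_mul_of_nonneg_left hF2' (Real.exp_pos (t₀-δ)).le
      have h7 : Real.exp (t₀-δ) * (Real.exp δ * (Real.exp (-t₀)/q * B)) = B / q := by
        rw [show Real.exp (t₀-δ) * (Real.exp δ * (Real.exp (-t₀)/q * B))
            = (Real.exp (t₀-δ) * (Real.exp δ * Real.exp (-t₀))) * (B/q) by ring,
          hprod, one_mul]
      linarith
    have h8 : I t ≤ Real.exp (-t) * (B/q) := by
      have h9 := mul_le_mul_of_nonneg_left h6 (Real.exp_pos (-t)).le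
      have h10 : Real.exp (-t) * (Real.exp t * I t) = I t := by
        rw [← mul_assoc, ← Real.exp_add, show -t + t = 0 by ring, Real.exp_zero, one_mul]
      rw [h10] at h9
      exact h9
    have hG'b : 1 - G' t ≤ I t + ε := by
      have h12 := (abs_le.1 (hks' t)).2
      rw [hGval t ht0] at h12
      linarith
    have hD : 0 < δ*L/t₀ - δ^2 :=
      lt_of_lt_of_le (by positivity) h2
    have hexplt : Real.exp (-t₀) < Real.exp (-t) := Real.exp_lt_exp.2 (by linarith)
    have hexp2 : Real.exp (-t₀) * Real.exp t₀ = 1 := by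
      rw [← Real.exp_add, show -t₀ + t₀ = 0 by ring, Real.exp_zero]
    have hk2 : ε ≤ Real.exp (-t₀)/q * (δ*L/t₀ - δ^2) := by
      have h12 := mul_le_mul_of_nonneg_left h2
        (le_of_lt (show (0:ℝ) < Real.exp (-t₀)/q by positivity))
      have h13 : Real.exp (-t₀)/q * (q * Real.exp t₀ * ε) = ε := by
        rw [show Real.exp (-t₀)/q * (q * Real.exp t₀ * ε)
            = (Real.exp (-t₀) * Real.exp t₀) * ε * (q/q) by ring,
          hexp2, div_self hq.ne']
        ring
      rw [h13] at h12
      exact h12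
    have hk1 : Real.exp (-t₀)/q * (δ*L/t₀ - δ^2) < Real.exp (-t)/q * (δ*L/t₀ - δ^2) := by
      have hlt2 : Real.exp (-t₀)/q < Real.exp (-t)/q := by gcongr
      exact mul_lt_mul_of_pos_right hlt2 hD
    have hh : Real.exp (-t)/q * B = Real.exp (-t)/q - Real.exp (-t)/q*(δ*L/t₀ - δ^2) := by
      rw [hBdef]; ring
    have h14 : Real.exp (-t) * (B/q) = Real.exp (-t)/q * B := by ring
    linarith
  exact ⟨hTlower, hTupper⟩


/-- Lemma 4.5, modulus of continuity: for `0 < q < 1` and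
`t₀ > log(1/q)`, `ω*(ε; t₀) ≤ (q/log(1/q)) t₀ e^{t₀} ε (1 + o(1))` as `ε → 0+`, i.e. the
`limsup` as `ε → 0+` of `ω*(ε; t₀) / ((q/log(1/q)) t₀ e^{t₀} ε)` is at most `1`. -/
theorem omegaStar_modulus (q t₀ : ℝ) (hq : 0 < q) (hq1 : q < 1)
    (ht₀ : Real.log (1 / q) < t₀) :
    limsup (fun ε : ℝ =>
        omegaStar q t₀ ε / ENNReal.ofReal (q / Real.log (1 / q) * t₀ * Real.exp t₀ * ε))
      (nhdsWithin 0 (Set.Ioi 0)) ≤ 1 := by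
  set L := Real.log (1 / q) with hLdef
  have hL : 0 < L := Real.log_pos (by rw [lt_div_iff₀ hq]; linarith)
  have ht₀pos : 0 < t₀ := lt_trans hL ht₀
  set C := q / L * t₀ * Real.exp t₀ with hCdef
  have hC : 0 < C := by positivity
  refine ENNReal.le_of_forall_pos_le_add ?_
  intro η hη _
  set a : ℝ := 1 + (η:ℝ) with hadef
  have ha1 : 1 < a := by rw [hadef]; linarith [NNReal.coe_pos.2 hη]
  have ha0 : 0 < a := by linarith
  have hlog : 0 < Real.log a := Real.log_pos ha1
  set ε₀ : ℝ := min t₀ (min (Real.log a) ((a-1)*L/(a*t₀))) / (a*C) with hε₀def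
  have hε₀pos : 0 < ε₀ := by
    apply div_pos
    · refine lt_min ht₀pos (lt_min hlog ?_)
      have : 0 < a - 1 := by linarith
      positivity
    · positivity
  have hev : ∀ᶠ ε in nhdsWithin (0:ℝ) (Set.Ioi 0),
      omegaStar q t₀ ε / ENNReal.ofReal (C * ε) ≤ ENNReal.ofReal a := by
    filter_upwards [Ioc_mem_nhdsGT_of_mem (Set.mem_Ico.2 ⟨le_refl (0:ℝ), hε₀pos⟩)] with ε hε
    obtain ⟨hεpos, hεle⟩ := hε
    set δ : ℝ := a * C * ε with hδdef
    have hδpos : 0 < δ := by positivity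
    have hδle : δ ≤ min t₀ (min (Real.log a) ((a-1)*L/(a*t₀))) := by
      calc δ = a*C*ε := hδdef
        _ ≤ a*C*ε₀ := by gcongr
        _ = min t₀ (min (Real.log a) ((a-1)*L/(a*t₀))) := by
            rw [hε₀def]; field_simp
    have hδt : δ ≤ t₀ := le_trans hδle (min_le_left _ _)
    have hδloga : δ ≤ Real.log a :=
      le_trans hδle (le_trans (min_le_right _ _) (min_le_left _ _))
    have hδ3 : δ ≤ (a-1)*L/(a*t₀) :=
      le_trans hδle (le_trans (min_le_right _ _) (min_le_right _ _))
    have hδL : δ * L / t₀ = a * (q * Real.exp t₀) * ε := by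
      rw [hδdef, hCdef]; field_simp
    have hexpa : Real.exp δ ≤ a := by
      calc Real.exp δ ≤ Real.exp (Real.log a) := Real.exp_le_exp.2 hδloga
        _ = a := Real.exp_log ha0
    have h1 : q * Real.exp (t₀ + δ) * ε ≤ δ * L / t₀ := by
      rw [hδL, Real.exp_add]
      calc q * (Real.exp t₀ * Real.exp δ) * ε ≤ q * (Real.exp t₀ * a) * ε := by gcongr
        _ = a * (q * Real.exp t₀) * ε := by ring
    have h2 : q * Real.exp t₀ * ε ≤ δ * L / t₀ - δ^2 := by
      rw [hδL]
      have hsq : δ^2 ≤ (a-1) * (q * Real.exp t₀) * ε := by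
        have h21 : δ * (a*t₀) ≤ (a-1)*L := by
          calc δ * (a*t₀) ≤ (a-1)*L/(a*t₀) * (a*t₀) :=
              mul_le_mul_of_nonneg_right hδ3 (by positivity)
            _ = (a-1)*L := by field_simp
        have h22 : δ * (a*C) ≤ (a-1) * (q * Real.exp t₀) := by
          rw [hCdef]
          calc δ * (a * (q/L*t₀*Real.exp t₀)) = (δ * (a*t₀)) * (q * Real.exp t₀) / L := by
                field_simp
            _ ≤ ((a-1)*L) * (q * Real.exp t₀) / L := by gcongr
            _ = (a-1) * (q * Real.exp t₀) := by field_simp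
        calc δ^2 = δ * (a*C) * ε := by rw [hδdef]; ring
          _ ≤ (a-1) * (q * Real.exp t₀) * ε := by gcongr
      have hr : a*(q*Real.exp t₀)*ε - (a-1)*(q*Real.exp t₀)*ε = q*Real.exp t₀*ε := by ring
      linarith
    have homega : omegaStar q t₀ ε ≤ ENNReal.ofReal δ := by
      simp only [omegaStar]
      refine iSup_le ?_
      rintro ⟨⟨G, G'⟩, hGmix, hTG, hcdf', hksP⟩
      obtain ⟨F, ⟨hFp, hF1⟩, hGF⟩ := hGmix
      simp only at hTG hcdf' hksP ⊢
      subst hGF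
      have hkey := key_bounds q t₀ hq hq1 ht₀ F hFp hF1 hTG G' hcdf' ε δ hεpos hksP hδt h1 h2
      refine sup_le ?_ ?_
      · rw [tsub_le_iff_right]
        refine le_trans hkey.2 ?_
        rw [← ENNReal.ofReal_add (by linarith) ht₀pos.le]
        exact ENNReal.ofReal_le_ofReal (by linarith)
      · rw [tsub_le_iff_right]
        calc ENNReal.ofReal t₀ = ENNReal.ofReal (δ + (t₀ - δ)) := by norm_num
          _ = ENNReal.ofReal δ + ENNReal.ofReal (t₀ - δ) :=
              ENNReal.ofReal_add (by linarith) (by linarith)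
          _ ≤ ENNReal.ofReal δ + Tq q G' := add_le_add le_rfl hkey.1
    refine ENNReal.div_le_of_le_mul (le_trans homega ?_)
    rw [← ENNReal.ofReal_mul ha0.le]
    exact le_of_eq (by rw [hδdef, mul_assoc])
  calc limsup (fun ε : ℝ => omegaStar q t₀ ε / ENNReal.ofReal (C * ε))
        (nhdsWithin 0 (Set.Ioi 0)) ≤ ENNReal.ofReal a :=
      Filter.limsup_le_of_le (by isBoundedDefault) hev
    _ = 1 + (η : ℝ≥0∞) := by
        rw [hadef, ENNReal.ofReal_add zero_le_one (by positivity), ENNReal.ofReal_one,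
          ENNReal.ofReal_coe_nnreal]
end

section
/- Fix 0 < q < 1 and G ∈ 𝒢 with G ≠ E. Let X_1, X_2, … be i.i.d. random variables with cdf G and let G_n denote the empirical cdf of X_1,…,X_n, G_n(t) = (1/n)·#{i ≤ n : X_i < t}. Then T_q(G_n) → T_q(G) almost surely as n → ∞. -/
open MeasureTheory Filter Set
open scoped ENNReal

/-- Exponential distribution on `(0,∞)` with mean `m`. -/
noncomputable def expMeas (m : ℝ) : Measure ℝ :=
  (volume.restrict (Set.Ioi (0:ℝ))).withDensity fun x => ENNReal.ofReal (m⁻¹ * Real.exp (-x / m))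

/-- The distribution on `[0,∞)` whose cdf is `mixCdf F`: `μ ~ F`, `X | μ ~ Exp(μ)`. -/
noncomputable def mixMeasure (F : Measure ℝ) : Measure ℝ := F.bind expMeas

open scoped Classical in
/-- The empirical cdf of the first `n` values of the sequence `X`:
`G_n(t) = (1/n) #{i < n : X i < t}`. -/
noncomputable def empCdf (X : ℕ → ℝ) (n : ℕ) : ℝ → ℝ :=
  fun t => (n : ℝ)⁻¹ * ((Finset.range n).filter fun i => X i < t).card

/-! ### Auxiliary lemmas -/

noncomputable def gbar (F : Measure ℝ) (t : ℝ) : ℝ := ∫ m, Real.exp (-t / m) ∂F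

lemma meas_expdiv (t : ℝ) : Measurable fun m : ℝ => Real.exp (-t / m) :=
  (measurable_const.div measurable_id).exp

lemma integrable_expdiv {F : Measure ℝ} (hae : ∀ᵐ m ∂F, 1 ≤ m) [IsProbabilityMeasure F] (t : ℝ) (ht : -1 ≤ t) :
    Integrable (fun m => Real.exp (-t / m)) F := by
  refine (integrable_const (Real.exp 1)).mono' ((meas_expdiv t).aestronglyMeasurable) ?_
  filter_upwards [hae] with m hm
  rw [Real.norm_eq_abs, abs_of_pos (Real.exp_pos _), Real.exp_le_exp]
  rcases le_or_gt 0 t with h | h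
  · have : -t / m ≤ 0 := div_nonpos_iff.2 (Or.inr ⟨by linarith, by linarith⟩)
    linarith
  · have h1 : -t / m ≤ -t := by
      apply div_le_self (by linarith) hm
    linarith

lemma mixCdf_eq {F : Measure ℝ} [IsProbabilityMeasure F] (hae : ∀ᵐ m ∂F, 1 ≤ m) {t : ℝ} (ht : 0 ≤ t) :
    mixCdf F t = 1 - gbar F t := by
  rw [mixCdf, if_pos ht, gbar, integral_sub (integrable_const 1) (integrable_expdiv hae t (by linarith))]
  simp

lemma continuousAt_gbar {F : Measure ℝ} [IsProbabilityMeasure F] (hae : ∀ᵐ m ∂F, 1 ≤ m) {t : ℝ}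
    (ht : -1 < t) : ContinuousAt (gbar F) t := by
  apply continuousAt_of_dominated (bound := fun _ => Real.exp 1)
  · exact Eventually.of_forall fun s => (meas_expdiv s).aestronglyMeasurable
  · have hev : ∀ᶠ s in nhds t, -1 < s := (isOpen_Ioi (a := (-1:ℝ))).eventually_mem ht
    filter_upwards [hev] with s hs
    filter_upwards [hae] with m hm
    rw [Real.norm_eq_abs, abs_of_pos (Real.exp_pos _), Real.exp_le_exp]
    rcases le_or_gt 0 s with h | h
    · have : -s / m ≤ 0 := div_nonpos_iff.2 (Or.inr ⟨by linarith, by linarith⟩)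
      linarith
    · have h1 : -s / m ≤ -s := div_le_self (by linarith) hm
      linarith
  · exact integrable_const _
  · filter_upwards [hae] with m hm
    exact (Real.continuous_exp.comp (continuous_id.neg.div_const m)).continuousAt

noncomputable def psiF (F : Measure ℝ) (t : ℝ) : ℝ := Real.exp t * gbar F t

lemma psiF_eq (F : Measure ℝ) (t : ℝ) : psiF F t = ∫ m, Real.exp (t - t / m) ∂F := by
  rw [psiF, gbar, ← integral_const_mul]
  refine integral_congr_ae (Eventually.of_forall fun m => ?_)
  show Real.exp t * Real.exp (-t / m) = Real.exp (t - t / m)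
  rw [← Real.exp_add]; congr 1; ring

lemma integrable_expsub {F : Measure ℝ} (hae : ∀ᵐ m ∂F, 1 ≤ m) [IsProbabilityMeasure F] (t : ℝ) (ht : 0 ≤ t) :
    Integrable (fun m => Real.exp (t - t / m)) F := by
  have h := (integrable_expdiv hae t (by linarith)).const_mul (Real.exp t)
  refine h.congr (Eventually.of_forall fun m => ?_)
  show Real.exp t * Real.exp (-t / m) = Real.exp (t - t / m)
  rw [← Real.exp_add]; congr 1; ring

lemma psiF_zero {F : Measure ℝ} [IsProbabilityMeasure F] : psiF F 0 = 1 := by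
  simp [psiF, gbar]

lemma one_sub_mixCdf {F : Measure ℝ} [IsProbabilityMeasure F] (hae : ∀ᵐ m ∂F, 1 ≤ m) {t : ℝ} (ht : 0 ≤ t) :
    1 - mixCdf F t = Real.exp (-t) * psiF F t := by
  rw [mixCdf_eq hae ht, psiF, ← mul_assoc, ← Real.exp_add]
  simp


lemma psiF_strictMonoOn {F : Measure ℝ} [IsProbabilityMeasure F] (hae : ∀ᵐ m ∂F, 1 ≤ m)
    (hpos : F {m | 1 < m} ≠ 0) : StrictMonoOn (psiF F) (Ici (0:ℝ)) := by
  intro t1 h1 t2 h2 h12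
  have i1 := integrable_expsub hae t1 h1
  have i2 := integrable_expsub hae t2 h2
  have hsub : psiF F t2 - psiF F t1
      = ∫ m, (Real.exp (t2 - t2 / m) - Real.exp (t1 - t1 / m)) ∂F := by
    rw [psiF_eq, psiF_eq, integral_sub i2 i1]
  have harg : ∀ m : ℝ, 1 ≤ m → t1 - t1 / m ≤ t2 - t2 / m := by
    intro m hm
    have hd : (t2 - t1) / m ≤ t2 - t1 := div_le_self (by linarith) hm
    have : t2 / m - t1 / m = (t2 - t1) / m := (sub_div _ _ _).symm
    linarith
  have hnn : 0 ≤ᵐ[F] fun m => Real.exp (t2 - t2 / m) - Real.exp (t1 - t1 / m) := by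
    filter_upwards [hae] with m hm
    have := harg m hm
    have := Real.exp_le_exp.2 this
    simp only [Pi.zero_apply]; linarith
  by_contra hcon
  push_neg at hcon
  have hle : ∫ m, (Real.exp (t2 - t2 / m) - Real.exp (t1 - t1 / m)) ∂F ≤ 0 := by
    rw [← hsub]; linarith
  have hge : 0 ≤ ∫ m, (Real.exp (t2 - t2 / m) - Real.exp (t1 - t1 / m)) ∂F :=
    integral_nonneg_of_ae hnn
  have hz : ∫ m, (Real.exp (t2 - t2 / m) - Real.exp (t1 - t1 / m)) ∂F = 0 := le_antisymm hle hge
  have h0 := (integral_eq_zero_iff_of_nonneg_ae hnn (i2.sub i1)).1 hz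
  have hnot : ∀ᵐ m ∂F, ¬ (1 < m) := by
    filter_upwards [h0] with m hm
    intro hlt
    have h1m : (t2 - t1) / m < t2 - t1 := div_lt_self (by linarith) hlt
    have hsd : t2 / m - t1 / m = (t2 - t1) / m := (sub_div _ _ _).symm
    have harglt : t1 - t1 / m < t2 - t2 / m := by linarith
    have := Real.exp_lt_exp.2 harglt
    simp only [Pi.zero_apply] at hm
    linarith
  rw [ae_iff] at hnot
  simp only [not_not] at hnot
  exact hpos hnot

lemma psiF_unbounded {F : Measure ℝ} [IsProbabilityMeasure F] (hae : ∀ᵐ m ∂F, 1 ≤ m)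
    (hpos : F {m | 1 < m} ≠ 0) (C : ℝ) : ∃ t, 0 ≤ t ∧ C < psiF F t := by
  -- find η > 0 with positive mass on {1 + η ≤ m}
  obtain ⟨n, hn⟩ : ∃ n : ℕ, F {m | 1 + 1 / (n + 1) ≤ m} ≠ 0 := by
    by_contra hall
    push_neg at hall
    apply hpos
    refine measure_mono_null ?_ (measure_iUnion_null hall)
    intro m hm
    obtain ⟨k, hk⟩ := exists_nat_one_div_lt (show (0:ℝ) < m - 1 by exact sub_pos.2 hm)
    exact mem_iUnion.2 ⟨k, by simp only [mem_setOf_eq]; push_cast; push_cast at hk; linarith⟩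
  set η : ℝ := 1 / (n + 1) with hη
  have hηpos : 0 < η := by positivity
  set S : Set ℝ := {m | 1 + η ≤ m} with hS
  have hSmeas : MeasurableSet S := measurableSet_Ici (a := 1 + η)
  have hc : 0 < (F S).toReal := by
    refine ENNReal.toReal_pos hn (measure_ne_top F S)
  set c := (F S).toReal with hcdef
  -- lower bound for psiF
  have key : ∀ t : ℝ, 0 ≤ t → Real.exp (t - t / (1 + η)) * c ≤ psiF F t := by
    intro t ht
    have hint := integrable_expdiv hae t (by linarith)
    have h1 : ∫ m in S, Real.exp (-t / m) ∂F ≤ gbar F t :=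
      setIntegral_le_integral hint (Eventually.of_forall fun m => (Real.exp_pos _).le)
    have h2 : Real.exp (-t / (1 + η)) * c ≤ ∫ m in S, Real.exp (-t / m) ∂F := by
      refine setIntegral_ge_of_const_le_real hSmeas (measure_ne_top F S) ?_ hint.integrableOn
      intro m hm
      have hm' : 1 + η ≤ m := hm
      have : t / m ≤ t / (1 + η) := div_le_div_of_nonneg_left ht (by linarith) hm'
      exact Real.exp_le_exp.2 (by rw [neg_div, neg_div]; linarith)
    have h3 : Real.exp (t - t / (1 + η)) = Real.exp t * Real.exp (-t / (1 + η)) := by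
      rw [← Real.exp_add]; congr 1; ring
    calc Real.exp (t - t / (1 + η)) * c
        = Real.exp t * (Real.exp (-t / (1 + η)) * c) := by rw [h3]; ring
      _ ≤ Real.exp t * ∫ m in S, Real.exp (-t / m) ∂F := by
          have := le_trans h2 (le_refl _)
          exact mul_le_mul_of_nonneg_left (le_trans h2 (le_refl _)) (Real.exp_pos _).le
      _ ≤ Real.exp t * gbar F t := mul_le_mul_of_nonneg_left h1 (Real.exp_pos _).le
      _ = psiF F t := rfl
  -- exp (t - t/(1+η)) * c → ∞
  have htend : Tendsto (fun t : ℝ => Real.exp (t - t / (1 + η)) * c) atTop atTop := by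
    have h1 : Tendsto (fun t : ℝ => t - t / (1 + η)) atTop atTop := by
      have : (fun t : ℝ => t - t / (1 + η)) = fun t : ℝ => t * (1 - 1 / (1 + η)) := by
        funext t; field_simp
      rw [this]
      refine Tendsto.atTop_mul_const ?_ tendsto_id
      have : 1 / (1 + η) < 1 := by
        rw [div_lt_one (by linarith)]; linarith
      linarith
    exact (Real.tendsto_exp_atTop.comp h1).atTop_mul_const hc
  obtain ⟨t, ht0, htC⟩ := ((eventually_ge_atTop (0:ℝ)).and (htend.eventually_gt_atTop C)).exists
  exact ⟨t, ht0, lt_of_lt_of_le htC (key t ht0)⟩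

lemma hpos_of_ne {F : Measure ℝ} [IsProbabilityMeasure F] (hae : ∀ᵐ m ∂F, 1 ≤ m)
    (hne : mixCdf F ≠ Ecdf) : F {m | 1 < m} ≠ 0 := by
  intro h0
  apply hne
  have hone : ∀ᵐ m ∂F, m = 1 := by
    have hnot : ∀ᵐ m ∂F, ¬ (1 < m) := by
      rw [ae_iff]; simpa using h0
    filter_upwards [hae, hnot] with m h1 h2
    linarith [not_lt.1 h2]
  funext t
  rw [mixCdf, Ecdf]
  rcases le_or_gt 0 t with ht | ht
  · rw [if_pos ht, if_pos ht]
    have : ∫ m, (1 - Real.exp (-t / m)) ∂F = ∫ _m, (1 - Real.exp (-t)) ∂F := by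
      refine integral_congr_ae ?_
      filter_upwards [hone] with m hm
      rw [hm, div_one]
    rw [this, integral_const]
    simp
  · rw [if_neg (not_le.2 ht), if_neg (not_le.2 ht)]

lemma mixCdf_nonneg {F : Measure ℝ} [IsProbabilityMeasure F] (hae : ∀ᵐ m ∂F, 1 ≤ m) (s : ℝ) :
    0 ≤ mixCdf F s := by
  rw [mixCdf]
  split
  · rename_i hs
    refine integral_nonneg_of_ae ?_
    filter_upwards [hae] with m hm
    have hle : -s / m ≤ 0 := div_nonpos_iff.2 (Or.inr ⟨by linarith, by linarith⟩)
    have := Real.exp_le_exp.2 hle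
    simp only [Real.exp_zero] at this
    simp only [Pi.zero_apply]
    linarith
  · exact le_refl 0

lemma continuous_mixCdf {F : Measure ℝ} [IsProbabilityMeasure F] (hae : ∀ᵐ m ∂F, 1 ≤ m) :
    Continuous (mixCdf F) := by
  have hg : ∀ t : ℝ, -1 < t → ContinuousAt (gbar F) t := fun t ht => continuousAt_gbar hae ht
  have heq : ∀ t : ℝ, 0 ≤ t → mixCdf F t = 1 - gbar F t := fun t ht => mixCdf_eq hae ht
  have hg0 : gbar F 0 = 1 := by simp [gbar]
  rw [continuous_iff_continuousAt]
  intro t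
  rcases lt_trichotomy t 0 with ht | ht | ht
  · have hev : ∀ᶠ s in nhds t, mixCdf F s = 0 := by
      filter_upwards [(isOpen_Iio (a := (0:ℝ))).eventually_mem ht] with s hs
      simp only [mixCdf, if_neg (not_le.2 (mem_Iio.1 hs))]
    have h0 : mixCdf F t = 0 := by simp only [mixCdf, if_neg (not_le.2 ht)]
    rw [ContinuousAt, h0]
    exact tendsto_const_nhds.congr' (hev.mono fun s hs => hs.symm)
  · subst ht
    have hcont : ContinuousAt (fun s => 1 - gbar F s) 0 :=
      continuousAt_const.sub (hg 0 (by norm_num))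
    have hmix0 : mixCdf F 0 = 0 := by rw [heq 0 le_rfl, hg0]; ring
    rw [ContinuousAt, hmix0]
    refine squeeze_zero_norm' (a := fun s => |1 - gbar F s|) ?_ ?_
    · refine Eventually.of_forall fun s => ?_
      rcases le_or_gt 0 s with hs | hs
      · rw [heq s hs, Real.norm_eq_abs]
      · simp only [mixCdf, if_neg (not_le.2 hs)]
        simp [abs_nonneg]
    · have h1 : Tendsto (fun s => |1 - gbar F s|) (nhds 0) (nhds |1 - gbar F 0|) :=
        continuous_abs.continuousAt.comp hcont
      simpa [hg0] using h1
  · have hev : ∀ᶠ s in nhds t, mixCdf F s = 1 - gbar F s := by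
      filter_upwards [(isOpen_Ioi (a := (0:ℝ))).eventually_mem ht] with s hs
      exact heq s hs.le
    have hc : ContinuousAt (fun s => 1 - gbar F s) t := continuousAt_const.sub (hg t (by linarith))
    exact hc.congr (hev.mono fun s hs => hs.symm)

lemma measurable_expMeas : Measurable expMeas := by
  apply Measure.measurable_of_measurable_coe
  intro s hs
  simp only [expMeas, withDensity_apply _ hs]
  apply Measurable.lintegral_prod_right (f := fun m x => ENNReal.ofReal (m⁻¹ * Real.exp (-x / m)))
  exact ENNReal.measurable_ofReal.comp
    ((measurable_fst.inv.mul ((measurable_snd.neg.div measurable_fst).exp)))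

lemma expMeas_Iio {m : ℝ} (hm : 1 ≤ m) (s : ℝ) :
    expMeas m (Iio s) = ENNReal.ofReal (1 - Real.exp (-s / m)) := by
  have hm0 : (0:ℝ) < m := by linarith
  rw [expMeas, withDensity_apply _ measurableSet_Iio,
    Measure.restrict_restrict measurableSet_Iio]
  have hIio : Iio s ∩ Ioi (0:ℝ) = Ioo 0 s := by
    ext x; simp [mem_Ioo, and_comm]
  rw [hIio]
  rcases le_or_gt s 0 with hs | hs
  · rw [Ioo_eq_empty (by linarith), Measure.restrict_empty, lintegral_zero_measure]
    have : Real.exp (-s / m) ≥ 1 := by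
      rw [show (1:ℝ) = Real.exp 0 by simp]
      exact Real.exp_le_exp.2 (div_nonneg (by linarith) hm0.le)
    rw [ENNReal.ofReal_eq_zero.2 (by linarith)]
  · -- s > 0
    have hcont : Continuous fun x : ℝ => m⁻¹ * Real.exp (-x / m) :=
      continuous_const.mul (Real.continuous_exp.comp (continuous_id.neg.div_const m))
    have hint : IntegrableOn (fun x : ℝ => m⁻¹ * Real.exp (-x / m)) (Ioo 0 s) volume :=
      hcont.integrableOn_Ioc.mono_set Ioo_subset_Ioc_self
    have hnn : 0 ≤ᵐ[volume.restrict (Ioo 0 s)] fun x : ℝ => m⁻¹ * Real.exp (-x / m) :=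
      Eventually.of_forall fun x => by positivity
    rw [← ofReal_integral_eq_lintegral_ofReal hint hnn]
    congr 1
    have heq : ∫ x in Ioo 0 s, m⁻¹ * Real.exp (-x / m) = ∫ x in (0:ℝ)..s, m⁻¹ * Real.exp (-x / m) := by
      rw [intervalIntegral.integral_of_le hs.le, integral_Ioc_eq_integral_Ioo]
    rw [heq]
    have hderiv : ∀ x ∈ uIcc (0:ℝ) s, HasDerivAt (fun y : ℝ => -Real.exp (-y / m))
        (m⁻¹ * Real.exp (-x / m)) x := by
      intro x _
      have h1 : HasDerivAt (fun y : ℝ => -y / m) (-(1:ℝ) / m) x := by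
        simpa using ((hasDerivAt_id x).neg.div_const m)
      have h2 := (h1.exp).neg
      have h3 : HasDerivAt (fun y : ℝ => -Real.exp (-y / m)) (-(Real.exp (-x / m) * (-1 / m))) x := h2
      exact h3.congr_deriv (by field_simp)
    rw [intervalIntegral.integral_eq_sub_of_hasDerivAt hderiv (hcont.intervalIntegrable 0 s)]
    have h0 : -(0:ℝ) / m = 0 := by ring
    rw [neg_div, h0, Real.exp_zero]; ring

lemma mixMeasure_Iio {F : Measure ℝ} [IsProbabilityMeasure F] (hae : ∀ᵐ m ∂F, 1 ≤ m) (s : ℝ) :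
    mixMeasure F (Iio s) = ENNReal.ofReal (mixCdf F s) := by
  rw [mixMeasure, Measure.bind_apply measurableSet_Iio measurable_expMeas.aemeasurable]
  have h1 : ∫⁻ m, expMeas m (Iio s) ∂F = ∫⁻ m, ENNReal.ofReal (1 - Real.exp (-s / m)) ∂F := by
    refine lintegral_congr_ae ?_
    filter_upwards [hae] with m hm
    exact expMeas_Iio hm s
  rw [h1]
  rcases le_or_gt 0 s with hs | hs
  · have hint : Integrable (fun m => 1 - Real.exp (-s / m)) F :=
      (integrable_const 1).sub (integrable_expdiv hae s (by linarith))
    have hnn : 0 ≤ᵐ[F] fun m => 1 - Real.exp (-s / m) := by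
      filter_upwards [hae] with m hm
      have hle : -s / m ≤ 0 := div_nonpos_iff.2 (Or.inr ⟨by linarith, by linarith⟩)
      have := Real.exp_le_exp.2 hle
      simp only [Real.exp_zero] at this
      simp only [Pi.zero_apply]; linarith
    rw [← ofReal_integral_eq_lintegral_ofReal hint hnn]
    simp only [mixCdf, if_pos hs]
  · have h2 : ∫⁻ m, ENNReal.ofReal (1 - Real.exp (-s / m)) ∂F = 0 := by
      rw [← lintegral_zero (μ := F)]
      refine lintegral_congr_ae ?_
      filter_upwards [hae] with m hm
      have hle : (0:ℝ) ≤ -s / m := div_nonneg (by linarith) (by linarith)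
      have := Real.exp_le_exp.2 hle
      simp only [Real.exp_zero] at this
      exact ENNReal.ofReal_eq_zero.2 (by linarith)
    rw [h2]
    simp only [mixCdf, if_neg (not_le.2 hs)]
    simp

lemma Tq_eq_ofReal {q : ℝ} (hq : 0 < q) (G ψ : ℝ → ℝ) (tstar : ℝ) (ht0 : 0 ≤ tstar)
    (hψG : ∀ t, 0 ≤ t → 1 - G t = Real.exp (-t) * ψ t)
    (hmono : StrictMonoOn ψ (Ici (0:ℝ))) (hstar : ψ tstar = 1 / q) :
    Tq q G = ENNReal.ofReal tstar := by
  have hmem : ∀ t : ℝ, (0 ≤ t ∧ Real.exp (-t) / q ≤ 1 - G t) ↔ tstar ≤ t := by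
    intro t
    constructor
    · rintro ⟨ht, hcond⟩
      by_contra hlt
      push_neg at hlt
      have hψt : ψ t < 1/q := by
        rw [← hstar]; exact hmono (mem_Ici.2 ht) (mem_Ici.2 ht0) hlt
      rw [hψG t ht] at hcond
      have h1 : Real.exp (-t) / q = Real.exp (-t) * (1/q) := by ring
      rw [h1] at hcond
      have := (mul_le_mul_iff_right₀ (Real.exp_pos (-t))).1 hcond
      linarith
    · intro hts
      have ht : 0 ≤ t := le_trans ht0 hts
      refine ⟨ht, ?_⟩
      have hψt : 1/q ≤ ψ t := by
        rw [← hstar]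
        exact hmono.monotoneOn (mem_Ici.2 ht0) (mem_Ici.2 ht) hts
      rw [hψG t ht]
      calc Real.exp (-t) / q = Real.exp (-t) * (1/q) := by ring
        _ ≤ Real.exp (-t) * ψ t := by
          exact mul_le_mul_of_nonneg_left hψt (Real.exp_pos _).le
  refine le_antisymm ?_ ?_
  · exact sInf_le ⟨tstar, (hmem tstar).2 le_rfl, rfl⟩
  · refine le_sInf ?_
    rintro b ⟨t, htS, rfl⟩
    exact ENNReal.ofReal_le_ofReal ((hmem t).1 htS)

lemma tendsto_Tq {q : ℝ} (hq : 0 < q) (G ψ : ℝ → ℝ) (tstar : ℝ) (ht0 : 0 ≤ tstar)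
    (hψG : ∀ t, 0 ≤ t → 1 - G t = Real.exp (-t) * ψ t)
    (hmono : StrictMonoOn ψ (Ici (0:ℝ))) (hstar : ψ tstar = 1 / q)
    (H : ℕ → ℝ → ℝ) (Hmono : ∀ n, Monotone (H n))
    (Hconv : ∀ t, 0 ≤ t → Tendsto (fun n => H n t) atTop (nhds (G t))) :
    Tendsto (fun n => Tq q (H n)) atTop (nhds (ENNReal.ofReal tstar)) := by
  have upper : ∀ ε : ℝ, 0 < ε → ∀ᶠ n in atTop, Tq q (H n) ≤ ENNReal.ofReal (tstar + ε) := by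
    intro ε hε
    have ht2 : (0:ℝ) ≤ tstar + ε := by linarith
    have hψ : 1/q < ψ (tstar + ε) := by
      rw [← hstar]; exact hmono (mem_Ici.2 ht0) (mem_Ici.2 ht2) (by linarith)
    have hgap : Real.exp (-(tstar+ε)) / q < 1 - G (tstar + ε) := by
      rw [hψG _ ht2]
      calc Real.exp (-(tstar+ε)) / q = Real.exp (-(tstar+ε)) * (1/q) := by ring
        _ < Real.exp (-(tstar+ε)) * ψ (tstar+ε) :=
          (mul_lt_mul_iff_right₀ (Real.exp_pos _)).2 hψ
    have htend : Tendsto (fun n => 1 - H n (tstar+ε)) atTop (nhds (1 - G (tstar+ε))) :=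
      tendsto_const_nhds.sub (Hconv (tstar+ε) ht2)
    filter_upwards [htend.eventually_const_lt hgap] with n hn
    exact sInf_le ⟨tstar + ε, ⟨ht2, hn.le⟩, rfl⟩
  have lower : ∀ t1 : ℝ, 0 ≤ t1 → t1 < tstar →
      ∀ᶠ n in atTop, ENNReal.ofReal t1 ≤ Tq q (H n) := by
    intro t1 ht1 h1s
    rcases eq_or_lt_of_le ht1 with h10 | h10
    · exact Eventually.of_forall fun n => by simp [← h10]
    set θ : ℝ := max (q * ψ t1) (1/2) with hθdef
    have hψt1 : ψ t1 < 1/q := by rw [← hstar]; exact hmono (mem_Ici.2 ht1) (mem_Ici.2 ht0) h1s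
    have hθ1 : θ < 1 := by
      refine max_lt ?_ (by norm_num)
      calc q * ψ t1 < q * (1/q) := (mul_lt_mul_iff_right₀ hq).2 hψt1
        _ = 1 := by field_simp
    have hθ0 : 0 < θ := lt_of_lt_of_le (by norm_num) (le_max_right _ _)
    set θ' : ℝ := (1 + θ)/2 with hθ'def
    have hθθ' : θ < θ' := by rw [hθ'def]; linarith
    have hθ'1 : θ' < 1 := by rw [hθ'def]; linarith
    have hθ'0 : 0 < θ' := by rw [hθ'def]; linarith
    have hbound : ∀ t, 0 ≤ t → t ≤ t1 → q * (1 - G t) ≤ θ * Real.exp (-t) := by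
      intro t ht ht1'
      have hψt : ψ t ≤ ψ t1 := hmono.monotoneOn (mem_Ici.2 ht) (mem_Ici.2 ht1) ht1'
      rw [hψG t ht]
      have h1 : q * ψ t ≤ θ :=
        le_trans (mul_le_mul_of_nonneg_left hψt hq.le) (le_max_left _ _)
      calc q * (Real.exp (-t) * ψ t) = (q * ψ t) * Real.exp (-t) := by ring
        _ ≤ θ * Real.exp (-t) := mul_le_mul_of_nonneg_right h1 (Real.exp_pos _).le
    set Δ : ℝ := Real.log (1/θ') with hΔdef
    have hΔ0 : 0 < Δ := Real.log_pos (by rw [lt_div_iff₀ hθ'0]; linarith)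
    set K : ℕ := ⌈t1 / Δ⌉₊ + 1 with hKdef
    have hK0 : (0:ℝ) < K := by positivity
    set step : ℝ := t1 / K with hstepdef
    have hstep0 : 0 < step := div_pos h10 hK0
    have hstepΔ : step ≤ Δ := by
      rw [hstepdef, div_le_iff₀ hK0]
      have h1 : t1 / Δ ≤ (⌈t1 / Δ⌉₊ : ℝ) := Nat.le_ceil _
      have h2 : (⌈t1 / Δ⌉₊ : ℝ) ≤ K := by rw [hKdef]; push_cast; linarith
      calc t1 = (t1 / Δ) * Δ := by field_simp
        _ ≤ (K : ℝ) * Δ := mul_le_mul_of_nonneg_right (le_trans h1 h2) hΔ0.le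
        _ = Δ * K := by ring
    have hev : ∀ᶠ n in atTop, ∀ j ∈ Finset.range (K+1),
        q * (1 - H n (j * step)) < θ' * Real.exp (-(j * step)) := by
      rw [eventually_all_finset]
      intro j hj
      have hjK : (j:ℝ) ≤ K := by
        have := Finset.mem_range.1 hj
        exact_mod_cast Nat.lt_succ_iff.1 this
      have hsj0 : (0:ℝ) ≤ j * step := by positivity
      have hsjt1 : (j:ℝ) * step ≤ t1 := by
        calc (j:ℝ) * step ≤ K * step := mul_le_mul_of_nonneg_right hjK hstep0.le
          _ = t1 := by rw [hstepdef]; field_simp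
      have htend : Tendsto (fun n => q * (1 - H n (j * step))) atTop
          (nhds (q * (1 - G (j * step)))) :=
        (tendsto_const_nhds.sub (Hconv _ hsj0)).const_mul q
      refine htend.eventually_lt_const ?_
      calc q * (1 - G (j * step)) ≤ θ * Real.exp (-(j * step)) := hbound _ hsj0 hsjt1
        _ < θ' * Real.exp (-(j * step)) :=
          mul_lt_mul_of_pos_right hθθ' (Real.exp_pos _)
    filter_upwards [hev] with n hn
    refine le_sInf ?_
    rintro b ⟨t, ⟨htpos, htcond⟩, rfl⟩
    refine ENNReal.ofReal_le_ofReal ?_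
    by_contra hlt
    push_neg at hlt
    -- t ∈ [0, t1), derive contradiction
    set j : ℕ := ⌊t / step⌋₊ with hjdef
    have hdiv0 : 0 ≤ t / step := div_nonneg htpos hstep0.le
    have hj1 : (j:ℝ) * step ≤ t := by
      have := Nat.floor_le hdiv0
      calc (j:ℝ) * step ≤ (t / step) * step := mul_le_mul_of_nonneg_right this hstep0.le
        _ = t := by field_simp
    have hj2 : t < ((j:ℝ) + 1) * step := by
      have := Nat.lt_floor_add_one (t / step)
      calc t = (t / step) * step := by field_simp
        _ < ((j:ℝ) + 1) * step := mul_lt_mul_of_pos_right this hstep0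
    have hjK : j < K + 1 := by
      have h1 : (j:ℝ) ≤ t / step := Nat.floor_le hdiv0
      have h2 : t / step < t1 / step := by
        apply div_lt_div_of_pos_right hlt hstep0
      have h3 : t1 / step = (K:ℝ) := by rw [hstepdef]; field_simp
      have h4 : (j:ℝ) < (K:ℝ) := by linarith
      have : j < K := by exact_mod_cast h4
      omega
    have hkey := hn j (Finset.mem_range.2 hjK)
    have hmono' : H n ((j:ℝ) * step) ≤ H n t := Hmono n hj1
    have hexp : Real.exp (-((j:ℝ) * step)) ≤ (1/θ') * Real.exp (-t) := by
      have h1 : -((j:ℝ) * step) ≤ -t + Δ := by nlinarith [hstepΔ, hj2]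
      calc Real.exp (-((j:ℝ) * step)) ≤ Real.exp (-t + Δ) := Real.exp_le_exp.2 h1
        _ = Real.exp Δ * Real.exp (-t) := by rw [← Real.exp_add]; ring_nf
        _ = (1/θ') * Real.exp (-t) := by
            rw [hΔdef, Real.exp_log (by positivity)]
    have hfinal : q * (1 - H n t) < Real.exp (-t) := by
      calc q * (1 - H n t) ≤ q * (1 - H n ((j:ℝ) * step)) := by nlinarith
        _ < θ' * Real.exp (-((j:ℝ) * step)) := hkey
        _ ≤ θ' * ((1/θ') * Real.exp (-t)) :=
            mul_le_mul_of_nonneg_left hexp hθ'0.le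
        _ = Real.exp (-t) := by field_simp
    have := (div_le_iff₀ hq).1 htcond
    linarith
  refine tendsto_order.2 ⟨?_, ?_⟩
  · intro a ha
    have hane : a ≠ ⊤ := ha.ne_top
    have hat : a.toReal < tstar := (ENNReal.lt_ofReal_iff_toReal_lt hane).1 ha
    set t1 := (a.toReal + tstar)/2 with ht1def
    have ht1 : 0 ≤ t1 := by
      have := ENNReal.toReal_nonneg (a := a); rw [ht1def]; linarith
    have h1s : t1 < tstar := by rw [ht1def]; linarith
    filter_upwards [lower t1 ht1 h1s] with n hn
    have hlt : a < ENNReal.ofReal t1 :=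
      (ENNReal.lt_ofReal_iff_toReal_lt hane).2 (by rw [ht1def]; linarith)
    exact lt_of_lt_of_le hlt hn
  · intro b hb
    rcases eq_or_ne b ⊤ with rfl | hbne
    · filter_upwards [upper 1 one_pos] with n hn
      exact lt_of_le_of_lt hn ENNReal.ofReal_lt_top
    · have hbt : tstar < b.toReal := (ENNReal.ofReal_lt_iff_lt_toReal ht0 hbne).1 hb
      set ε := (b.toReal - tstar)/2 with hεdef
      have hε : 0 < ε := by rw [hεdef]; linarith
      filter_upwards [upper ε hε] with n hn
      refine lt_of_le_of_lt hn ?_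
      exact (ENNReal.ofReal_lt_iff_lt_toReal (by linarith) hbne).2 (by rw [hεdef]; linarith)

lemma tendsto_of_rat (G : ℝ → ℝ) (hG : Continuous G) (g : ℕ → ℝ → ℝ)
    (hg : ∀ n, Monotone (g n))
    (h : ∀ r : ℚ, Tendsto (fun n => g n (r:ℝ)) atTop (nhds (G r))) (t : ℝ) :
    Tendsto (fun n => g n t) atTop (nhds (G t)) := by
  refine tendsto_order.2 ⟨?_, ?_⟩
  · intro a ha
    have hopen : IsOpen {s : ℝ | a < G s} := isOpen_lt continuous_const hG
    obtain ⟨δ, hδ, hball⟩ := Metric.isOpen_iff.1 hopen t ha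
    obtain ⟨r, hr1, hr2⟩ := exists_rat_btwn (show t - δ < t by linarith)
    have hrball : (r:ℝ) ∈ Metric.ball t δ := by
      rw [Metric.mem_ball, Real.dist_eq, abs_lt]; constructor <;> linarith
    have hGr : a < G r := hball hrball
    filter_upwards [(h r).eventually_const_lt hGr] with n hn
    exact lt_of_lt_of_le hn (hg n hr2.le)
  · intro b hb
    have hopen : IsOpen {s : ℝ | G s < b} := isOpen_lt hG continuous_const
    obtain ⟨δ, hδ, hball⟩ := Metric.isOpen_iff.1 hopen t hb
    obtain ⟨r, hr1, hr2⟩ := exists_rat_btwn (show t < t + δ by linarith)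
    have hrball : (r:ℝ) ∈ Metric.ball t δ := by
      rw [Metric.mem_ball, Real.dist_eq, abs_lt]; constructor <;> linarith
    have hGr : G r < b := hball hrball
    filter_upwards [(h r).eventually_lt_const hGr] with n hn
    exact lt_of_le_of_lt (hg n hr1.le) hn

/-- Corollary 4.1, consistency: if `X₁, X₂, …` are i.i.d. with cdf
`G = mixCdf F ∈ 𝒢`, `G ≠ E`, then `T_q(G_n) → T_q(G)` almost surely. -/
theorem Tq_empirical_consistent (q : ℝ) (hq : 0 < q) (hq1 : q < 1)
    (F : Measure ℝ) (hF : F ∈ mixSet) (hne : mixCdf F ≠ Ecdf)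
    {Ω : Type*} [MeasurableSpace Ω] (P : Measure Ω) [IsProbabilityMeasure P]
    (X : ℕ → Ω → ℝ) (hmeas : ∀ i, Measurable (X i))
    (hindep : ProbabilityTheory.iIndepFun X P)
    (hdist : ∀ i, Measure.map (X i) P = mixMeasure F) :
    ∀ᵐ ω ∂P, Tendsto (fun n => Tq q (empCdf (fun i => X i ω) n)) atTop
      (nhds (Tq q (mixCdf F))) := by
  obtain ⟨hp, hae⟩ := hF
  haveI := hp
  have hpos : F {m | 1 < m} ≠ 0 := hpos_of_ne hae hne
  have hcont : Continuous (mixCdf F) := continuous_mixCdf hae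
  have hsm : StrictMonoOn (psiF F) (Ici 0) := psiF_strictMonoOn hae hpos
  have h1q : (1:ℝ) < 1/q := by rw [lt_div_iff₀ hq]; linarith
  obtain ⟨T, hT0, hTC⟩ := psiF_unbounded hae hpos (1/q)
  have hconton : ContinuousOn (psiF F) (Icc 0 T) := by
    intro t ht
    have h1 : ContinuousAt (psiF F) t :=
      (Real.continuous_exp.continuousAt).mul (continuousAt_gbar hae (by linarith [ht.1]))
    exact h1.continuousWithinAt
  have hmem : 1/q ∈ Icc (psiF F 0) (psiF F T) := by
    constructor
    · rw [psiF_zero]; linarith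
    · exact hTC.le
  obtain ⟨tstar, htmem, hstar⟩ := intermediate_value_Icc hT0 hconton hmem
  have ht0 : 0 ≤ tstar := htmem.1
  have hψG : ∀ t, 0 ≤ t → 1 - mixCdf F t = Real.exp (-t) * psiF F t :=
    fun t ht => one_sub_mixCdf hae ht
  rw [Tq_eq_ofReal hq (mixCdf F) (psiF F) tstar ht0 hψG hsm hstar]
  have hident : ∀ i, ProbabilityTheory.IdentDistrib (X i) (X 0) P P := fun i =>
    ⟨(hmeas i).aemeasurable, (hmeas 0).aemeasurable, by rw [hdist i, hdist 0]⟩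
  have hSLLN : ∀ r : ℚ, ∀ᵐ ω ∂P, Tendsto (fun n => empCdf (fun i => X i ω) n r) atTop
      (nhds (mixCdf F r)) := by
    intro r
    set Fr : ℝ → ℝ := Set.indicator (Iio (r:ℝ)) 1 with hFrdef
    have Fmeas : Measurable Fr := (measurable_indicator_const_iff 1).2 measurableSet_Iio
    have hFrle : ∀ x, ‖Fr x‖ ≤ 1 := by
      intro x
      rw [hFrdef]
      by_cases hx : x ∈ Iio (r:ℝ) <;> simp [Set.indicator_apply, hx]
    have hint : Integrable (Fr ∘ X 0) P := by
      refine (integrable_const (1:ℝ)).mono' ((Fmeas.comp (hmeas 0)).aestronglyMeasurable) ?_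
      exact Eventually.of_forall fun ω => hFrle _
    have hpind : Pairwise (Function.onFun (ProbabilityTheory.IndepFun · · P) fun i => Fr ∘ X i) :=
      fun i j hij => (hindep.indepFun hij).comp Fmeas Fmeas
    have hid : ∀ i, ProbabilityTheory.IdentDistrib (Fr ∘ X i) (Fr ∘ X 0) P P :=
      fun i => (hident i).comp Fmeas
    have hexp : (∫ ω, (Fr ∘ X 0) ω ∂P) = mixCdf F r := by
      have h1 : ∀ ω, (Fr ∘ X 0) ω = (X 0 ⁻¹' (Iio (r:ℝ))).indicator 1 ω := by
        intro ω
        rw [hFrdef]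
        by_cases hx : X 0 ω ∈ Iio (r:ℝ) <;>
          simp [Set.indicator_apply, hx, Function.comp]
      rw [integral_congr_ae (Eventually.of_forall h1),
        integral_indicator_one ((hmeas 0) measurableSet_Iio)]
      have h2 : P (X 0 ⁻¹' Iio (r:ℝ)) = mixMeasure F (Iio (r:ℝ)) := by
        rw [← hdist 0, Measure.map_apply (hmeas 0) measurableSet_Iio]
      rw [Measure.real, h2, mixMeasure_Iio hae, ENNReal.toReal_ofReal (mixCdf_nonneg hae _)]
    have hsl := ProbabilityTheory.strong_law_ae_real (fun i => Fr ∘ X i) hint hpind hid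
    filter_upwards [hsl] with ω hω
    have hempeq : ∀ n, empCdf (fun i => X i ω) n r
        = (∑ i ∈ Finset.range n, (Fr ∘ X i) ω) / n := by
      intro n
      simp only [empCdf]
      classical
      rw [Finset.card_filter]
      push_cast
      rw [div_eq_inv_mul]
      congr 1
    rw [show (fun n => empCdf (fun i => X i ω) n r)
        = fun n => (∑ i ∈ Finset.range n, (Fr ∘ X i) ω)/n from funext hempeq]
    convert hω using 2
    exact hexp.symm
  have hall : ∀ᵐ ω ∂P, ∀ r : ℚ, Tendsto (fun n => empCdf (fun i => X i ω) n r) atTop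
      (nhds (mixCdf F r)) := (ae_all_iff).2 hSLLN
  filter_upwards [hall] with ω hω
  have hmonoE : ∀ n, Monotone (empCdf (fun i => X i ω) n) := by
    intro n t1 t2 h12
    simp only [empCdf]
    refine mul_le_mul_of_nonneg_left ?_ (by positivity)
    have hsub : ((Finset.range n).filter fun i => X i ω < t1)
        ⊆ (Finset.range n).filter fun i => X i ω < t2 :=
      Finset.monotone_filter_right _ fun i _ hi => lt_of_lt_of_le hi h12
    exact_mod_cast Finset.card_le_card hsub
  refine tendsto_Tq hq (mixCdf F) (psiF F) tstar ht0 hψG hsm hstar _ hmonoE ?_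
  intro t ht
  exact tendsto_of_rat (mixCdf F) hcont _ hmonoE hω t
end

section
/- Fix 0 < q < 1 and 0 < p < 2, and define T_q*(η; p) = inf{ T_q(G) : G ∈ 𝒢_p(η) }. Then as η → 0+, T_q*(η; p) = p·( log(1/η) + log log log(1/η) ) + log((1−q)/q) + o(1). -/
open MeasureTheory Filter Set
open scoped ENNReal

/-- `ℱ_p(η)`: members of `ℱ` with `∫ (log μ)^p dF ≤ η^p`. -/
def mixSetP (p η : ℝ) : Set (Measure ℝ) :=
  {F | F ∈ mixSet ∧ ∫⁻ m, ENNReal.ofReal ((Real.log m) ^ p) ∂F ≤ ENNReal.ofReal (η ^ p)}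

/-- `T_q^*(η; p) = inf {T_q(G) : G ∈ 𝒢_p(η)}`. -/
noncomputable def TqStar (q p η : ℝ) : ℝ≥0∞ :=
  ⨅ F ∈ mixSetP p η, Tq q (mixCdf F)


lemma exp_meas (t : ℝ) : Measurable (fun m : ℝ => Real.exp (-t / m)) :=
  Real.measurable_exp.comp (measurable_const.div measurable_id)

lemma exp_integrable (F : Measure ℝ) [IsProbabilityMeasure F]
    (hFs : ∀ᵐ m ∂F, 1 ≤ m) (t : ℝ) (ht : 0 ≤ t) :
    Integrable (fun m : ℝ => Real.exp (-t / m)) F := by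
  refine (integrable_const (1:ℝ)).mono' (exp_meas t).aestronglyMeasurable ?_
  filter_upwards [hFs] with m hm
  rw [Real.norm_eq_abs, abs_of_pos (Real.exp_pos _)]
  rw [Real.exp_le_one_iff]
  have hm0 : (0:ℝ) < m := lt_of_lt_of_le one_pos hm
  rw [neg_div]
  simp [div_nonneg ht hm0.le]

lemma survival (F : Measure ℝ) [IsProbabilityMeasure F]
    (hFs : ∀ᵐ m ∂F, 1 ≤ m) (t : ℝ) (ht : 0 ≤ t) :
    1 - mixCdf F t = ∫ m, Real.exp (-t / m) ∂F := by
  rw [mixCdf, if_pos ht, integral_sub (integrable_const 1) (exp_integrable F hFs t ht)]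
  simp

lemma markov (p η : ℝ) (hp : 0 < p) (hη : 0 < η) (F : Measure ℝ)
    (hF : ∫⁻ m, ENNReal.ofReal ((Real.log m) ^ p) ∂F ≤ ENNReal.ofReal (η ^ p))
    (s : ℝ) (hs : 0 < s) :
    (F {m : ℝ | Real.exp s < m}).toReal ≤ η ^ p / s ^ p := by
  have hsp : (0:ℝ) < s ^ p := Real.rpow_pos_of_pos hs p
  have hmeas : Measurable (fun m : ℝ => ENNReal.ofReal ((Real.log m) ^ p)) :=
    ENNReal.measurable_ofReal.comp ((Real.measurable_log).pow_const p)
  have hsub : {m : ℝ | Real.exp s < m} ⊆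
      {m : ℝ | ENNReal.ofReal (s ^ p) ≤ ENNReal.ofReal ((Real.log m) ^ p)} := by
    intro m hm
    simp only [Set.mem_setOf_eq] at hm ⊢
    apply ENNReal.ofReal_le_ofReal
    have hlog : s ≤ Real.log m := by
      rw [← Real.log_exp s]
      exact Real.log_le_log (Real.exp_pos s) hm.le
    exact Real.rpow_le_rpow hs.le hlog hp.le
  have h1 : ENNReal.ofReal (s ^ p) * F {m : ℝ | Real.exp s < m} ≤
      ENNReal.ofReal (η ^ p) := by
    refine le_trans ?_ hF
    refine le_trans (mul_le_mul_right (measure_mono hsub) _) ?_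
    exact mul_meas_ge_le_lintegral₀ hmeas.aemeasurable _
  have h2 : F {m : ℝ | Real.exp s < m} ≤ ENNReal.ofReal (η ^ p / s ^ p) := by
    rw [ENNReal.ofReal_div_of_pos hsp]
    rw [ENNReal.le_div_iff_mul_le (Or.inl (by simp [hsp.le, hsp])) (Or.inl ENNReal.ofReal_ne_top)]
    rwa [mul_comm]
  exact ENNReal.toReal_le_of_le_ofReal (div_nonneg (Real.rpow_pos_of_pos hη p).le hsp.le) h2

lemma core_LB (q : ℝ) (hq : 0 < q) (F : Measure ℝ) [IsProbabilityMeasure F]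
    (hFs : ∀ᵐ m ∂F, 1 ≤ m) (t s₁ s₂ c₁ c₂ : ℝ)
    (ht : 0 ≤ t) (hs₁ : 0 < s₁) (hs₂ : 0 < s₂)
    (hF₁ : (F {m : ℝ | Real.exp s₁ < m}).toReal ≤ c₁)
    (hF₂ : (F {m : ℝ | Real.exp s₂ < m}).toReal ≤ c₂)
    (hkey : Real.exp (t * s₁) + Real.exp (t - t / Real.exp s₂) * c₁ + Real.exp t * c₂ < 1 / q) :
    1 - mixCdf F t < Real.exp (-t) / q := by
  have hc₁ : 0 ≤ c₁ := le_trans ENNReal.toReal_nonneg hF₁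
  have hc₂ : 0 ≤ c₂ := le_trans ENNReal.toReal_nonneg hF₂
  set S₁ : Set ℝ := {m : ℝ | Real.exp s₁ < m}
  set S₂ : Set ℝ := {m : ℝ | Real.exp s₂ < m}
  have hS₁ : MeasurableSet S₁ := measurableSet_lt measurable_const measurable_id
  have hS₂ : MeasurableSet S₂ := measurableSet_lt measurable_const measurable_id
  set g : ℝ → ℝ := fun m =>
    Real.exp (t * s₁ - t) + S₁.indicator (fun _ => Real.exp (-t / Real.exp s₂)) m +
      S₂.indicator (fun _ => (1:ℝ)) m with hg
  have hgint : Integrable g F := by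
    refine (Integrable.add ?_ ?_).add ?_
    · exact integrable_const _
    · exact (integrable_const _).indicator hS₁
    · exact (integrable_const _).indicator hS₂
  have hpt : ∀ᵐ m ∂F, Real.exp (-t / m) ≤ g m := by
    filter_upwards [hFs] with m hm
    have hm0 : (0:ℝ) < m := lt_of_lt_of_le one_pos hm
    have hnn1 : 0 ≤ S₁.indicator (fun _ => Real.exp (-t / Real.exp s₂)) m :=
      Set.indicator_nonneg (fun _ _ => (Real.exp_pos _).le) m
    have hnn2 : 0 ≤ S₂.indicator (fun _ => (1:ℝ)) m :=
      Set.indicator_nonneg (fun _ _ => zero_le_one) m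
    rcases le_or_gt m (Real.exp s₁) with h1 | h1
    · have hlog : Real.log m ≤ s₁ := by
        rw [← Real.log_exp s₁]; exact Real.log_le_log hm0 h1
      have h1m : 1 - Real.log m ≤ 1 / m := by
        have := Real.add_one_le_exp (-Real.log m)
        rw [Real.exp_neg, Real.exp_log hm0] at this
        rw [one_div]; linarith
      have : -t / m ≤ t * s₁ - t := by
        rw [neg_div]
        have h2 : t * (1 - Real.log m) ≤ t * (1 / m) :=
          mul_le_mul_of_nonneg_left h1m ht
        have h3 : t * Real.log m ≤ t * s₁ := mul_le_mul_of_nonneg_left hlog ht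
        have : t / m = t * (1 / m) := by ring
        nlinarith [mul_le_mul_of_nonneg_left h1m ht]
      calc Real.exp (-t / m) ≤ Real.exp (t * s₁ - t) := Real.exp_le_exp.mpr this
        _ ≤ g m := by rw [hg]; simp only; linarith
    · rcases le_or_gt m (Real.exp s₂) with h2 | h2
      · have hmem : m ∈ S₁ := h1
        have : Real.exp (-t / m) ≤ Real.exp (-t / Real.exp s₂) := by
          apply Real.exp_le_exp.mpr
          rw [neg_div, neg_div, neg_le_neg_iff]
          exact div_le_div_of_nonneg_left ht hm0 h2
        rw [hg]; simp only [Set.indicator_of_mem hmem]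
        have h0 : (0:ℝ) < Real.exp (t * s₁ - t) := Real.exp_pos _
        linarith
      · have hmem : m ∈ S₂ := h2
        have : Real.exp (-t / m) ≤ 1 := by
          rw [Real.exp_le_one_iff, neg_div]
          simp [div_nonneg ht hm0.le]
        rw [hg]; simp only [Set.indicator_of_mem hmem]
        have h0 : (0:ℝ) < Real.exp (t * s₁ - t) := Real.exp_pos _
        linarith
  have hint : ∫ m, Real.exp (-t / m) ∂F ≤ ∫ m, g m ∂F :=
    integral_mono_ae (exp_integrable F hFs t ht) hgint hpt
  have hgval : ∫ m, g m ∂F =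
      Real.exp (t * s₁ - t) + (F S₁).toReal * Real.exp (-t / Real.exp s₂) + (F S₂).toReal := by
    simp only [hg]
    have step1 : ∫ m, (Real.exp (t * s₁ - t) +
        S₁.indicator (fun _ => Real.exp (-t / Real.exp s₂)) m) +
        S₂.indicator (fun _ => (1:ℝ)) m ∂F =
        (∫ m, Real.exp (t * s₁ - t) +
          S₁.indicator (fun _ => Real.exp (-t / Real.exp s₂)) m ∂F) +
        ∫ m, S₂.indicator (fun _ => (1:ℝ)) m ∂F :=
      integral_add ((integrable_const _).add ((integrable_const _).indicator hS₁))
        ((integrable_const _).indicator hS₂)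
    have step2 : ∫ m, Real.exp (t * s₁ - t) +
        S₁.indicator (fun _ => Real.exp (-t / Real.exp s₂)) m ∂F =
        (∫ _m, Real.exp (t * s₁ - t) ∂F) +
        ∫ m, S₁.indicator (fun _ => Real.exp (-t / Real.exp s₂)) m ∂F :=
      integral_add (integrable_const _) ((integrable_const _).indicator hS₁)
    rw [step1, step2, integral_indicator_const _ hS₁, integral_indicator_const _ hS₂]
    simp [smul_eq_mul, mul_comm]
    rfl
  rw [survival F hFs t ht]
  have hfin : Real.exp (t * s₁ - t) + (F S₁).toReal * Real.exp (-t / Real.exp s₂) + (F S₂).toReal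
      < Real.exp (-t) / q := by
    have e1 : Real.exp (t * s₁ - t) = Real.exp (-t) * Real.exp (t * s₁) := by
      rw [← Real.exp_add]; ring_nf
    have e2 : Real.exp (-t / Real.exp s₂) = Real.exp (-t) * Real.exp (t - t / Real.exp s₂) := by
      rw [← Real.exp_add]; ring_nf
    have e3 : (1:ℝ) = Real.exp (-t) * Real.exp t := by rw [← Real.exp_add]; simp
    have hbound : (F S₁).toReal * Real.exp (-t / Real.exp s₂) ≤
        c₁ * Real.exp (-t / Real.exp s₂) :=
      mul_le_mul_of_nonneg_right hF₁ (Real.exp_pos _).le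
    have hepos : (0:ℝ) < Real.exp (-t) := Real.exp_pos _
    have hkey' : Real.exp (-t) * (Real.exp (t * s₁) + Real.exp (t - t / Real.exp s₂) * c₁ +
        Real.exp t * c₂) < Real.exp (-t) * (1 / q) :=
      mul_lt_mul_of_pos_left hkey hepos
    rw [mul_one_div] at hkey'
    calc Real.exp (t * s₁ - t) + (F S₁).toReal * Real.exp (-t / Real.exp s₂) + (F S₂).toReal
        ≤ Real.exp (t * s₁ - t) + c₁ * Real.exp (-t / Real.exp s₂) + c₂ := by linarith
      _ = Real.exp (-t) * (Real.exp (t * s₁) + Real.exp (t - t / Real.exp s₂) * c₁ +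
          Real.exp t * c₂) := by
          have h4 : Real.exp (-t) * Real.exp t = 1 := by rw [← Real.exp_add]; simp
          rw [e1, e2]; linear_combination (-c₂) * h4
      _ < Real.exp (-t) / q := hkey'
  linarith

noncomputable def F2 (ε μ : ℝ) : Measure ℝ :=
  ENNReal.ofReal (1 - ε) • Measure.dirac 1 + ENNReal.ofReal ε • Measure.dirac μ

lemma F2_prob (ε μ : ℝ) (h0 : 0 ≤ ε) (h1 : ε ≤ 1) : IsProbabilityMeasure (F2 ε μ) := by
  constructor
  rw [F2]
  simp only [Measure.add_apply, Measure.smul_apply, smul_eq_mul]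
  rw [Measure.dirac_apply_of_mem (Set.mem_univ _), Measure.dirac_apply_of_mem (Set.mem_univ _)]
  rw [mul_one, mul_one, ← ENNReal.ofReal_add (by linarith) h0]
  norm_num

lemma F2_ae (ε μ : ℝ) (hμ : 1 ≤ μ) : ∀ᵐ m ∂(F2 ε μ), 1 ≤ m := by
  rw [ae_iff]
  have hset : {m : ℝ | ¬ 1 ≤ m} = Set.Iio 1 := by ext m; simp [Set.mem_Iio, not_le]
  rw [hset, F2]
  simp only [Measure.add_apply, Measure.smul_apply, smul_eq_mul]
  rw [Measure.dirac_apply' _ measurableSet_Iio, Measure.dirac_apply' _ measurableSet_Iio]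
  rw [Set.indicator_of_notMem (by simp), Set.indicator_of_notMem (by simp [not_lt, hμ])]
  simp

lemma F2_lintegral (p ε μ : ℝ) (hp : 0 < p) (h0 : 0 ≤ ε) (hμ : 1 ≤ μ) :
    ∫⁻ m, ENNReal.ofReal ((Real.log m) ^ p) ∂(F2 ε μ) =
      ENNReal.ofReal (ε * (Real.log μ) ^ p) := by
  rw [F2, lintegral_add_measure, lintegral_smul_measure, lintegral_smul_measure,
    lintegral_dirac, lintegral_dirac]
  rw [Real.log_one, Real.zero_rpow hp.ne']
  simp only [ENNReal.ofReal_zero, mul_zero, zero_add]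
  rw [smul_zero, zero_add, smul_eq_mul, ← ENNReal.ofReal_mul h0]

lemma F2_mixCdf (ε μ t : ℝ) (h0 : 0 ≤ ε) (h1 : ε ≤ 1) (ht : 0 ≤ t) :
    mixCdf (F2 ε μ) t = (1 - ε) * (1 - Real.exp (-t)) + ε * (1 - Real.exp (-t / μ)) := by
  rw [mixCdf, if_pos ht, F2]
  rw [integral_add_measure ?h1 ?h2]
  case h1 =>
    refine Integrable.smul_measure ?_ ENNReal.ofReal_ne_top
    exact ⟨(aestronglyMeasurable_const.sub (exp_meas t).aestronglyMeasurable),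
      by rw [hasFiniteIntegral_iff_norm]; simp [lintegral_dirac]⟩
  case h2 =>
    refine Integrable.smul_measure ?_ ENNReal.ofReal_ne_top
    exact ⟨(aestronglyMeasurable_const.sub (exp_meas t).aestronglyMeasurable),
      by rw [hasFiniteIntegral_iff_norm]; simp [lintegral_dirac]⟩
  rw [integral_smul_measure, integral_smul_measure, integral_dirac, integral_dirac]
  rw [ENNReal.toReal_ofReal (by linarith), ENNReal.toReal_ofReal h0]
  simp [smul_eq_mul, div_one]

lemma F2_memP (p η ε μ : ℝ) (hp : 0 < p) (h0 : 0 ≤ ε) (h1 : ε ≤ 1) (hμ : 1 ≤ μ)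
    (hc : ε * (Real.log μ) ^ p ≤ η ^ p) : F2 ε μ ∈ mixSetP p η := by
  refine ⟨⟨F2_prob ε μ h0 h1, F2_ae ε μ hμ⟩, ?_⟩
  rw [F2_lintegral p ε μ hp h0 hμ]
  exact ENNReal.ofReal_le_ofReal hc

lemma F2_Tq_le (q p ε μ t₀ : ℝ) (hq : 0 < q) (h0 : 0 ≤ ε) (h1 : ε ≤ 1)
    (ht₀ : 0 ≤ t₀)
    (hcond : (1 - q) / q + ε ≤ ε * Real.exp (t₀ - t₀ / μ)) :
    Tq q (mixCdf (F2 ε μ)) ≤ ENNReal.ofReal t₀ := by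
  apply sInf_le
  refine ⟨t₀, ⟨ht₀, ?_⟩, rfl⟩
  rw [F2_mixCdf ε μ t₀ h0 h1 ht₀]
  have key : ε * Real.exp (-(t₀ / μ)) ≥ ((1 - q)/q + ε) * Real.exp (-t₀) := by
    have := mul_le_mul_of_nonneg_right hcond (Real.exp_pos (-t₀)).le
    calc ((1 - q)/q + ε) * Real.exp (-t₀) ≤ ε * Real.exp (t₀ - t₀ / μ) * Real.exp (-t₀) := this
      _ = ε * Real.exp (-(t₀ / μ)) := by rw [mul_assoc, ← Real.exp_add]; ring_nf
  have h1q : Real.exp (-t₀) / q = (1 + (1-q)/q) * Real.exp (-t₀) := by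
    field_simp
    ring
  rw [h1q, neg_div]
  nlinarith [Real.exp_pos (-t₀)]


noncomputable def L1 (x : ℝ) : ℝ := Real.log x
noncomputable def L2 (x : ℝ) : ℝ := Real.log (Real.log x)

lemma hL1 : Tendsto L1 atTop atTop := Real.tendsto_log_atTop
lemma hL2 : Tendsto L2 atTop atTop := Real.tendsto_log_atTop.comp Real.tendsto_log_atTop
lemma hlogdiv : Tendsto (fun y : ℝ => Real.log y / y) atTop (nhds 0) :=
  Real.isLittleO_log_id_atTop.tendsto_div_nhds_zero
lemma hL2L1 : Tendsto (fun x => L2 x / L1 x) atTop (nhds 0) := hlogdiv.comp hL1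
lemma hL1x : Tendsto (fun x => L1 x / x) atTop (nhds 0) := hlogdiv
lemma hL2x : Tendsto (fun x => L2 x / x) atTop (nhds 0) := by
  apply tendsto_of_tendsto_of_tendsto_of_le_of_le' (tendsto_const_nhds) hL1x
  · filter_upwards [hL2.eventually_ge_atTop 0, eventually_ge_atTop (1:ℝ)] with x h1 h2
    positivity
  · filter_upwards [hL1.eventually_ge_atTop 1, eventually_ge_atTop (1:ℝ)] with x h1 h2
    simp only [L1, L2] at *
    gcongr
    · exact Real.log_le_self (by linarith)

section UB
variable (p q ε : ℝ)

noncomputable def aU (x : ℝ) : ℝ := L1 x + L2 x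
noncomputable def t0 (p q ε x : ℝ) : ℝ :=
  p * (x + L2 x) + Real.log ((1 - q) / q) + ε
noncomputable def eU (p x : ℝ) : ℝ := Real.exp (-(p * x)) / (aU x) ^ p

lemma haU : Tendsto aU atTop atTop := Tendsto.atTop_add_atTop hL1 hL2

lemma ht0 (hp : 0 < p) : Tendsto (t0 p q ε) atTop atTop := by
  apply tendsto_atTop_add_const_right
  apply tendsto_atTop_add_const_right
  exact (Tendsto.atTop_add_atTop tendsto_id hL2).const_mul_atTop hp

lemma ht0x (hp : 0 < p) : Tendsto (fun x => t0 p q ε x / x) atTop (nhds p) := by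
  have he : ∀ᶠ x in atTop, t0 p q ε x / x =
      p + p * (L2 x / x) + (Real.log ((1 - q) / q) + ε) / x := by
    filter_upwards [eventually_gt_atTop (0:ℝ)] with x hx
    rw [t0]
    field_simp
    ring
  rw [tendsto_congr' he]
  have : Tendsto (fun x : ℝ => p + p * (L2 x / x) + (Real.log ((1 - q) / q) + ε) / x)
      atTop (nhds (p + p * 0 + 0)) := by
    refine Tendsto.add (Tendsto.add tendsto_const_nhds (Tendsto.const_mul p hL2x)) ?_
    exact tendsto_const_nhds.div_atTop tendsto_id
  simpa using this

lemma heU0 (hp : 0 < p) : Tendsto (eU p) atTop (nhds 0) := by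
  have hexp : Tendsto (fun x : ℝ => Real.exp (-(p * x))) atTop (nhds 0) := by
    apply Real.tendsto_exp_atBot.comp
    exact tendsto_neg_atBot_iff.mpr (tendsto_id.const_mul_atTop hp)
  apply tendsto_of_tendsto_of_tendsto_of_le_of_le' tendsto_const_nhds hexp
  · filter_upwards [haU.eventually_ge_atTop 1] with x hx
    exact div_nonneg (Real.exp_pos _).le (Real.rpow_nonneg (by linarith) p)
  · filter_upwards [haU.eventually_ge_atTop 1] with x hx
    rw [eU, div_le_iff₀ (Real.rpow_pos_of_pos (by linarith) p)]
    nth_rewrite 1 [← mul_one (Real.exp (-(p * x)))]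
    exact mul_le_mul_of_nonneg_left (Real.one_le_rpow hx hp.le) (Real.exp_pos _).le

lemma hratioU : Tendsto (fun x => L1 x / aU x) atTop (nhds 1) := by
  have h1 : Tendsto (fun x => (1 + L2 x / L1 x)⁻¹) atTop (nhds 1) := by
    have := (tendsto_const_nhds.add hL2L1).inv₀ (by norm_num : (1:ℝ) + 0 ≠ 0)
    simpa using this
  apply Tendsto.congr' ?_ h1
  filter_upwards [hL1.eventually_ge_atTop 1, hL2.eventually_ge_atTop 0] with x h1 h2
  rw [aU]
  have ha : L1 x ≠ 0 := by linarith
  have hb : L1 x + L2 x ≠ 0 := by linarith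
  have hc : 1 + L2 x / L1 x ≠ 0 := by positivity
  field_simp

lemma hrpow_one (p : ℝ) {f : ℝ → ℝ} (hf : Tendsto f atTop (nhds 1)) :
    Tendsto (fun x => f x ^ p) atTop (nhds 1) := by
  have := (Real.continuousAt_rpow_const 1 p (Or.inl one_ne_zero)).tendsto.comp hf
  simpa [Real.one_rpow, Function.comp_def] using this

lemma ht0mu (hp : 0 < p) :
    Tendsto (fun x => t0 p q ε x / Real.exp (aU x)) atTop (nhds 0) := by
  have key : Tendsto (fun x => (t0 p q ε x / x) * (L1 x)⁻¹) atTop (nhds 0) := by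
    have := (ht0x p q ε hp).mul hL1.inv_tendsto_atTop
    simpa using this
  apply Tendsto.congr' ?_ key
  filter_upwards [hL1.eventually_ge_atTop 1, eventually_ge_atTop (1:ℝ)] with x h1 h2
  have hx : (0:ℝ) < x := by linarith
  have hlx : (0:ℝ) < Real.log x := by simpa [L1] using lt_of_lt_of_le one_pos h1
  have hexp : Real.exp (aU x) = x * L1 x := by
    rw [aU, Real.exp_add, L1, L2, Real.exp_log hx, Real.exp_log hlx]
  rw [hexp]
  ring

noncomputable def WU (p q ε x : ℝ) : ℝ := eU p x * Real.exp (t0 p q ε x - t0 p q ε x / Real.exp (aU x))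

lemma hWU (hp : 0 < p) (hq : 0 < q) (hq1 : q < 1) :
    Tendsto (WU p q ε) atTop (nhds (Real.exp (Real.log ((1 - q) / q) + ε))) := by
  set C := Real.log ((1 - q) / q)
  have hN : Tendsto (fun x => Real.exp (C + ε) * (L1 x / aU x) ^ p *
      Real.exp (-(t0 p q ε x / Real.exp (aU x)))) atTop (nhds (Real.exp (C + ε))) := by
    have h2 : Tendsto (fun x => Real.exp (-(t0 p q ε x / Real.exp (aU x)))) atTop (nhds 1) := by
      have h0 : Tendsto (fun x => -(t0 p q ε x / Real.exp (aU x))) atTop (nhds 0) := by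
        simpa using (ht0mu p q ε hp).neg
      have := (Real.continuous_exp.tendsto 0).comp h0
      simpa [Function.comp_def] using this
    have := ((tendsto_const_nhds.mul (hrpow_one p (hratioU))).mul h2 :
      Tendsto _ atTop (nhds ((Real.exp (C + ε) * 1) * 1)))
    simpa using this
  apply Tendsto.congr' ?_ hN
  filter_upwards [hL1.eventually_ge_atTop 1, hL2.eventually_ge_atTop 0] with x h1 h2
  have hL1p : (0:ℝ) < L1 x := by linarith
  have haUp : (0:ℝ) < aU x := by rw [aU]; linarith
  have hap : (0:ℝ) < aU x ^ p := Real.rpow_pos_of_pos haUp p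
  rw [WU, eU]
  have hsplit : Real.exp (t0 p q ε x - t0 p q ε x / Real.exp (aU x)) =
      Real.exp (t0 p q ε x) * Real.exp (-(t0 p q ε x / Real.exp (aU x))) := by
    rw [← Real.exp_add]; ring_nf
  rw [hsplit]
  have hkey : Real.exp (-(p * x)) * Real.exp (t0 p q ε x) = L1 x ^ p * Real.exp (C + ε) := by
    rw [← Real.exp_add, t0]
    have : -(p * x) + (p * (x + L2 x) + C + ε) = L2 x * p + (C + ε) := by ring
    rw [this, Real.exp_add]
    congr 1
    simp only [L1, L2] at hL1p ⊢
    rw [Real.rpow_def_of_pos hL1p]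
  have hdiv : (L1 x / aU x) ^ p = L1 x ^ p / aU x ^ p :=
    Real.div_rpow hL1p.le haUp.le p
  rw [hdiv]
  set e3 := Real.exp (-(t0 p q ε x / Real.exp (aU x))) with he3
  symm
  calc Real.exp (-(p * x)) / aU x ^ p * (Real.exp (t0 p q ε x) * e3)
      = (Real.exp (-(p * x)) * Real.exp (t0 p q ε x)) * e3 / aU x ^ p := by ring
    _ = (L1 x ^ p * Real.exp (C + ε)) * e3 / aU x ^ p := by rw [hkey]
    _ = Real.exp (C + ε) * (L1 x ^ p / aU x ^ p) * e3 := by ring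

lemma ub_eventual (hp : 0 < p) (hq : 0 < q) (hq1 : q < 1) (hε : 0 < ε) :
    ∀ᶠ x in atTop,
      0 ≤ eU p x ∧ eU p x ≤ 1 ∧ 1 ≤ Real.exp (aU x) ∧ 0 ≤ t0 p q ε x ∧
      eU p x * (Real.log (Real.exp (aU x))) ^ p ≤ Real.exp (-(p * x)) ∧
      (1 - q) / q + eU p x ≤ eU p x * Real.exp (t0 p q ε x - t0 p q ε x / Real.exp (aU x)) := by
  have hQ : (0:ℝ) < (1 - q) / q := div_pos (by linarith) hq
  have hgap : (1 - q) / q + 0 < Real.exp (Real.log ((1 - q) / q) + ε) := by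
    rw [Real.exp_add, Real.exp_log hQ, add_zero]
    nth_rewrite 1 [← mul_one ((1 - q)/q)]
    exact mul_lt_mul_of_pos_left (by nlinarith [Real.add_one_le_exp ε]) hQ
  have hcond : ∀ᶠ x in atTop, (1 - q) / q + eU p x < WU p q ε x :=
    Filter.Tendsto.eventually_lt (tendsto_const_nhds.add (heU0 p hp)) (hWU p q ε hp hq hq1) hgap
  filter_upwards [haU.eventually_ge_atTop 1, (ht0 p q ε hp).eventually_ge_atTop 0,
    (heU0 p hp).eventually_le_const (by norm_num : (0:ℝ) < 1) |>.and
      ((heU0 p hp).eventually_lt_const (by norm_num : (0:ℝ) < 1)), hcond]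
    with x ha ht0' he' hc
  have haP : (0:ℝ) < aU x := by linarith
  have hap : (0:ℝ) < aU x ^ p := Real.rpow_pos_of_pos haP p
  have heU' : 0 ≤ eU p x := div_nonneg (Real.exp_pos _).le hap.le
  refine ⟨heU', he'.1, Real.one_le_exp (by linarith), ht0', ?_, le_of_lt hc⟩
  rw [Real.log_exp, eU, div_mul_cancel₀ _ hap.ne']


noncomputable def s1f (p q ε x : ℝ) : ℝ := ((t0 p q ε x + 1) ^ 2)⁻¹
noncomputable def s2f (x : ℝ) : ℝ := L1 x - 2 * L2 x

lemma hs2top : Tendsto s2f atTop atTop := by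
  apply tendsto_atTop_mono' atTop ?_ (hL1.atTop_div_const two_pos)
  filter_upwards [hL2L1.eventually_le_const (by norm_num : (0:ℝ) < 1/4),
    hL1.eventually_ge_atTop 1] with x h1 h2
  have hL1p : (0:ℝ) < L1 x := by linarith
  have : L2 x ≤ L1 x / 4 := by
    have := (div_le_iff₀ hL1p).mp h1
    linarith
  rw [s2f]; linarith

lemma hratioL : Tendsto (fun x => L1 x / s2f x) atTop (nhds 1) := by
  have h1 : Tendsto (fun x => (1 - 2 * (L2 x / L1 x))⁻¹) atTop (nhds 1) := by
    have := ((tendsto_const_nhds.sub (hL2L1.const_mul 2)).inv₀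
      (by norm_num : (1:ℝ) - 2 * 0 ≠ 0))
    simpa using this
  apply Tendsto.congr' ?_ h1
  filter_upwards [hL2L1.eventually_le_const (by norm_num : (0:ℝ) < 1/4),
    hL1.eventually_ge_atTop 1, hL2.eventually_ge_atTop 0] with x h1 h2 h3
  have hL1p : (0:ℝ) < L1 x := by linarith
  have h4 : L2 x ≤ L1 x / 4 := by
    have := (div_le_iff₀ hL1p).mp h1
    linarith
  have hs2p : (0:ℝ) < s2f x := by rw [s2f]; linarith
  rw [s2f]
  have hb : L1 x - 2 * L2 x ≠ 0 := by linarith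
  field_simp

lemma lb_eventual (hp : 0 < p) (hq : 0 < q) (hq1 : q < 1) (hε : 0 < ε) :
    ∀ᶠ x in atTop,
      0 ≤ t0 p q (-ε) x ∧ 0 < s1f p q (-ε) x ∧ 0 < s2f x ∧
      Real.exp (t0 p q (-ε) x * s1f p q (-ε) x) +
        Real.exp (t0 p q (-ε) x - t0 p q (-ε) x / Real.exp (s2f x)) *
          (Real.exp (-(p * x)) / (s1f p q (-ε) x) ^ p) +
        Real.exp (t0 p q (-ε) x) * (Real.exp (-(p * x)) / (s2f x) ^ p) < 1 / q := by
  set C := Real.log ((1 - q) / q) with hC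
  set T := t0 p q (-ε) with hT'
  have hQ : (0:ℝ) < (1 - q) / q := div_pos (by linarith) hq
  have hT : Tendsto T atTop atTop := ht0 p q (-ε) hp
  have hTx : Tendsto (fun x => T x / x) atTop (nhds p) := ht0x p q (-ε) hp
  -- term 1
  have hTs1 : Tendsto (fun x => T x * s1f p q (-ε) x) atTop (nhds 0) := by
    apply tendsto_of_tendsto_of_tendsto_of_le_of_le' tendsto_const_nhds
      ((tendsto_atTop_add_const_right _ 1 hT).inv_tendsto_atTop)
    · filter_upwards [hT.eventually_ge_atTop 0] with x h0
      have : (0:ℝ) < (T x + 1) ^ 2 := by positivity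
      rw [s1f]; positivity
    · filter_upwards [hT.eventually_ge_atTop 0] with x h0
      simp only [Pi.inv_apply, s1f, ← hT']
      have h1 : (0:ℝ) < T x + 1 := by linarith
      rw [← div_eq_mul_inv, inv_eq_one_div, div_le_div_iff₀ (by positivity) h1]
      nlinarith
  have hterm1 : Tendsto (fun x => Real.exp (T x * s1f p q (-ε) x)) atTop (nhds 1) := by
    have := (Real.continuous_exp.tendsto 0).comp hTs1
    simpa [Function.comp_def] using this
  -- term 3
  have hterm3 : Tendsto (fun x => Real.exp (T x) * (Real.exp (-(p * x)) / (s2f x) ^ p))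
      atTop (nhds (Real.exp (C - ε))) := by
    have hN : Tendsto (fun x => Real.exp (C - ε) * (L1 x / s2f x) ^ p) atTop
        (nhds (Real.exp (C - ε))) := by
      have := (hrpow_one p hratioL).const_mul (Real.exp (C - ε))
      simpa using this
    apply Tendsto.congr' ?_ hN
    filter_upwards [hL1.eventually_ge_atTop 1, hL2.eventually_ge_atTop 0,
      hs2top.eventually_ge_atTop 1] with x h1 h2 h3
    have hL1p : (0:ℝ) < L1 x := by linarith
    have hs2p : (0:ℝ) < s2f x := by linarith
    have hkey : Real.exp (T x) * Real.exp (-(p * x)) = L1 x ^ p * Real.exp (C - ε) := by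
      rw [← Real.exp_add, hT', t0]
      have he : p * (x + L2 x) + C + -ε + -(p * x) = L2 x * p + (C - ε) := by ring
      rw [he, Real.exp_add]
      congr 1
      simp only [L1, L2] at hL1p ⊢
      rw [Real.rpow_def_of_pos hL1p]
    have hdiv : (L1 x / s2f x) ^ p = L1 x ^ p / s2f x ^ p := Real.div_rpow hL1p.le hs2p.le p
    rw [hdiv]
    calc Real.exp (C - ε) * (L1 x ^ p / s2f x ^ p)
        = (L1 x ^ p * Real.exp (C - ε)) / s2f x ^ p := by ring
      _ = (Real.exp (T x) * Real.exp (-(p * x))) / s2f x ^ p := by rw [hkey]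
      _ = Real.exp (T x) * (Real.exp (-(p * x)) / s2f x ^ p) := by ring
  -- term 2
  have hterm2 : Tendsto (fun x => Real.exp (T x - T x / Real.exp (s2f x)) *
      (Real.exp (-(p * x)) / (s1f p q (-ε) x) ^ p)) atTop (nhds 0) := by
    set E : ℝ → ℝ := fun x => T x - T x * (L1 x)^2 / x - p * x + Real.log ((T x + 1)^2) * p
      with hE'
    have hL1sq : Tendsto (fun x => (L1 x)^2) atTop atTop := by
      apply Tendsto.congr (fun x => (pow_two (L1 x)).symm) (hL1.atTop_mul_atTop₀ hL1)
    have hH : Tendsto (fun x => (p * L2 x + (C - ε) + p * Real.log ((T x + 1)^2)) / (L1 x)^2)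
        atTop (nhds 0) := by
      apply tendsto_of_tendsto_of_tendsto_of_le_of_le'
        (show Tendsto (fun x => -(L1 x)⁻¹) atTop (nhds 0) by
          simpa using hL1.inv_tendsto_atTop.neg)
        (show Tendsto (fun x => (5 * p + 1) * (L1 x)⁻¹) atTop (nhds 0) by
          simpa using hL1.inv_tendsto_atTop.const_mul (5 * p + 1))
      · filter_upwards [hL1.eventually_ge_atTop 1, hL2.eventually_ge_atTop 0,
          hT.eventually_ge_atTop 0, hL1.eventually_ge_atTop (ε - C)] with x h1 h2 h3 h4
        have hL1p : (0:ℝ) < L1 x := by linarith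
        have hlogT : 0 ≤ Real.log ((T x + 1)^2) := by
          apply Real.log_nonneg; nlinarith
        have hnum : -(L1 x) ≤ p * L2 x + (C - ε) + p * Real.log ((T x + 1)^2) := by
          nlinarith
        have heq : -(L1 x)⁻¹ = -(L1 x) / (L1 x)^2 := by
          field_simp [pow_two]
        rw [heq]
        gcongr
      · filter_upwards [hL1.eventually_ge_atTop 1, hL2.eventually_ge_atTop 0,
          hT.eventually_ge_atTop 0, hL1.eventually_ge_atTop (C - ε),
          (hTx.eventually_le_const (by linarith : p < p + 1)),
          eventually_ge_atTop (1:ℝ), eventually_ge_atTop (p + 2:ℝ)]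
          with x h1 h2 h3 h4 h5 h6 h7
        have hL1p : (0:ℝ) < L1 x := by linarith
        have hxp : (0:ℝ) < x := by linarith
        have hTle : T x ≤ (p + 1) * x := by
          have := (div_le_iff₀ hxp).mp h5
          linarith
        have hTx2 : T x + 1 ≤ x ^ 2 := by nlinarith
        have hlogT : Real.log ((T x + 1)^2) ≤ 4 * L1 x := by
          have hT1 : (0:ℝ) < T x + 1 := by linarith
          rw [Real.log_pow]
          have : Real.log (T x + 1) ≤ Real.log (x ^ 2) := Real.log_le_log hT1 hTx2
          rw [Real.log_pow] at this
          simp only [L1]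
          push_cast at this ⊢
          have hlx : (0:ℝ) ≤ Real.log x := by simpa [L1] using (by linarith : (0:ℝ) ≤ L1 x)
          linarith
        have hL2L1' : L2 x ≤ L1 x := by
          simp only [L1, L2] at *
          exact Real.log_le_self (by linarith)
        have hnum : p * L2 x + (C - ε) + p * Real.log ((T x + 1)^2) ≤ (5 * p + 1) * L1 x := by
          have hlogT0 : 0 ≤ Real.log ((T x + 1)^2) := by
            apply Real.log_nonneg; nlinarith
          nlinarith
        have heq : (5 * p + 1) * (L1 x)⁻¹ = ((5 * p + 1) * L1 x) / (L1 x)^2 := by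
          field_simp [pow_two]
        rw [heq]
        gcongr
    have hG : Tendsto (fun x => (p * L2 x + (C - ε) + p * Real.log ((T x + 1)^2)) / (L1 x)^2
        - T x / x) atTop (nhds (0 - p)) := hH.sub hTx
    have hEbot : Tendsto E atTop atBot := by
      have hmul := Filter.Tendsto.atTop_mul_neg (by linarith : (0:ℝ) - p < 0) hL1sq hG
      apply Tendsto.congr' ?_ hmul
      filter_upwards [hL1.eventually_ge_atTop 1, eventually_ge_atTop (1:ℝ)] with x h1 h2
      have hL1p : (0:ℝ) < L1 x := by linarith
      have hxp : (0:ℝ) < x := by linarith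
      have hTval : T x = p * x + p * L2 x + C - ε := by rw [hT', t0]; ring
      have expand : L1 x ^ 2 * ((p * L2 x + (C - ε) + p * Real.log ((T x + 1)^2)) / L1 x ^ 2
          - T x / x) = (p * L2 x + (C - ε) + p * Real.log ((T x + 1)^2))
          - T x * L1 x ^ 2 / x := by
        field_simp
      rw [expand]
      simp only [hE']
      linear_combination -hTval
    have hexpE : Tendsto (fun x => Real.exp (E x)) atTop (nhds 0) :=
      Real.tendsto_exp_atBot.comp hEbot
    apply Tendsto.congr' ?_ hexpE
    filter_upwards [hL1.eventually_ge_atTop 1, eventually_ge_atTop (1:ℝ),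
      hT.eventually_ge_atTop 0] with x h1 h2 h3
    have hL1p : (0:ℝ) < L1 x := by linarith
    have hxp : (0:ℝ) < x := by linarith
    have hT1 : (0:ℝ) < (T x + 1) ^ 2 := by positivity
    have hexps2 : Real.exp (s2f x) = x / (L1 x)^2 := by
      rw [s2f, Real.exp_sub]
      have e1 : Real.exp (L1 x) = x := by rw [L1, Real.exp_log hxp]
      have e2 : Real.exp (2 * L2 x) = (L1 x)^2 := by
        rw [two_mul, Real.exp_add, ← pow_two]
        congr 1
        rw [L2, L1, Real.exp_log (by simpa [L1] using hL1p)]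
      rw [e1, e2]
    have hs1val : Real.exp (-(p * x)) / (s1f p q (-ε) x) ^ p =
        Real.exp (-(p * x) + Real.log ((T x + 1)^2) * p) := by
      rw [s1f, Real.inv_rpow hT1.le, div_eq_mul_inv, inv_inv, Real.exp_add]
      congr 1
      rw [Real.rpow_def_of_pos hT1]
    rw [hs1val, hexps2, ← Real.exp_add]
    congr 1
    rw [hE']
    field_simp
    ring
  -- combine
  have hsum : Tendsto (fun x =>
      Real.exp (T x * s1f p q (-ε) x) +
      Real.exp (T x - T x / Real.exp (s2f x)) * (Real.exp (-(p * x)) / (s1f p q (-ε) x) ^ p) +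
      Real.exp (T x) * (Real.exp (-(p * x)) / (s2f x) ^ p)) atTop
      (nhds (1 + 0 + Real.exp (C - ε))) := (hterm1.add hterm2).add hterm3
  have hlim : 1 + 0 + Real.exp (C - ε) < 1 / q := by
    have : Real.exp (C - ε) < (1 - q) / q := by
      rw [Real.exp_sub, hC, Real.exp_log hQ]
      have h1 : Real.exp ε > 1 := by
        rw [← Real.exp_zero]
        exact Real.exp_lt_exp.mpr hε
      rw [div_lt_iff₀ (Real.exp_pos ε)]
      nth_rewrite 1 [← mul_one ((1 - q) / q)]
      exact mul_lt_mul_of_pos_left h1 hQ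
    have : 1 + (1 - q) / q = 1 / q := by field_simp; ring
    linarith
  filter_upwards [hT.eventually_ge_atTop 0, hs2top.eventually_ge_atTop 1,
    hsum.eventually_lt_const hlim] with x h1 h2 h3
  refine ⟨h1, ?_, by linarith, h3⟩
  rw [s1f]
  positivity
end UB


section Glue
variable (p q ε : ℝ)

lemma hLtend : Tendsto (fun η : ℝ => Real.log (1 / η)) (nhdsWithin 0 (Set.Ioi 0)) atTop := by
  apply (Real.tendsto_log_atTop.comp (tendsto_inv_nhdsGT_zero (𝕜 := ℝ))).congr
  intro η
  simp [Function.comp, one_div]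

lemma eta_rpow (η : ℝ) (hη : 0 < η) : η ^ p = Real.exp (-(p * Real.log (1 / η))) := by
  rw [Real.rpow_def_of_pos hη, Real.log_div one_ne_zero hη.ne', Real.log_one]
  ring_nf

lemma ub_glue (hp : 0 < p) (hq : 0 < q) (hq1 : q < 1) (hε : 0 < ε) :
    ∀ᶠ η in nhdsWithin (0:ℝ) (Set.Ioi 0), TqStar q p η ≤
      ENNReal.ofReal (p * (Real.log (1 / η) + Real.log (Real.log (Real.log (1 / η)))) +
        Real.log ((1 - q) / q) + ε) := by
  filter_upwards [(hLtend).eventually (ub_eventual p q ε hp hq hq1 hε),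
    self_mem_nhdsWithin] with η hub hη
  simp only [Set.mem_Ioi] at hη
  set x := Real.log (1 / η) with hx
  obtain ⟨h0, h1, hμ, ht0', hlin, hcond⟩ := hub
  have hmem : F2 (eU p x) (Real.exp (aU x)) ∈ mixSetP p η := by
    apply F2_memP p η _ _ hp h0 h1 hμ
    rw [eta_rpow p η hη, ← hx]
    exact hlin
  have hTq : Tq q (mixCdf (F2 (eU p x) (Real.exp (aU x)))) ≤ ENNReal.ofReal (t0 p q ε x) :=
    F2_Tq_le q p (eU p x) (Real.exp (aU x)) (t0 p q ε x) hq h0 h1 ht0' hcond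
  have hstep : TqStar q p η ≤ Tq q (mixCdf (F2 (eU p x) (Real.exp (aU x)))) := by
    apply iInf₂_le _ hmem
  exact le_trans (le_trans hstep hTq) (le_of_eq rfl)

lemma lb_glue (hp : 0 < p) (hq : 0 < q) (hq1 : q < 1) (hε : 0 < ε) :
    ∀ᶠ η in nhdsWithin (0:ℝ) (Set.Ioi 0),
      ENNReal.ofReal (p * (Real.log (1 / η) + Real.log (Real.log (Real.log (1 / η)))) +
        Real.log ((1 - q) / q) - ε) ≤ TqStar q p η := by
  filter_upwards [(hLtend).eventually (lb_eventual p q ε hp hq hq1 hε),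
    self_mem_nhdsWithin] with η hlb hη
  simp only [Set.mem_Ioi] at hη
  set x := Real.log (1 / η) with hx
  obtain ⟨hT0, hs1, hs2, hkey⟩ := hlb
  have hTval : p * (Real.log (1 / η) + Real.log (Real.log (Real.log (1 / η)))) +
      Real.log ((1 - q) / q) - ε = t0 p q (-ε) x := by
    simp only [t0, L2, hx]
    ring
  rw [hTval]
  apply le_iInf₂
  intro F hF
  haveI : IsProbabilityMeasure F := hF.1.1
  apply le_sInf
  rintro b ⟨t, ⟨ht0', hcond⟩, rfl⟩
  apply ENNReal.ofReal_le_ofReal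
  by_contra hlt
  push_neg at hlt
  set T := t0 p q (-ε) x with hT'
  set s₁ := s1f p q (-ε) x with hs₁'
  set s₂ := s2f x with hs₂'
  have hc₁ : (F {m : ℝ | Real.exp s₁ < m}).toReal ≤ η ^ p / s₁ ^ p :=
    markov p η hp hη F hF.2 s₁ hs1
  have hc₂ : (F {m : ℝ | Real.exp s₂ < m}).toReal ≤ η ^ p / s₂ ^ p :=
    markov p η hp hη F hF.2 s₂ hs2
  have hfac : (0:ℝ) ≤ 1 - (Real.exp s₂)⁻¹ := by
    have : (1:ℝ) ≤ Real.exp s₂ := Real.one_le_exp hs2.le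
    have h2 : (Real.exp s₂)⁻¹ ≤ 1 := by
      rw [inv_le_one_iff₀]; right; exact this
    linarith
  have hkey' : Real.exp (t * s₁) + Real.exp (t - t / Real.exp s₂) * (η ^ p / s₁ ^ p) +
      Real.exp t * (η ^ p / s₂ ^ p) < 1 / q := by
    rw [eta_rpow p η hη, ← hx]
    have e1 : Real.exp (t * s₁) ≤ Real.exp (T * s₁) :=
      Real.exp_le_exp.mpr (mul_le_mul_of_nonneg_right hlt.le hs1.le)
    have e2 : Real.exp (t - t / Real.exp s₂) ≤ Real.exp (T - T / Real.exp s₂) := by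
      apply Real.exp_le_exp.mpr
      have h1 : t - t / Real.exp s₂ = t * (1 - (Real.exp s₂)⁻¹) := by
        field_simp
      have h2 : T - T / Real.exp s₂ = T * (1 - (Real.exp s₂)⁻¹) := by
        field_simp
      rw [h1, h2]
      exact mul_le_mul_of_nonneg_right hlt.le hfac
    have e3 : Real.exp t ≤ Real.exp T := Real.exp_le_exp.mpr hlt.le
    have hcc₁ : (0:ℝ) ≤ Real.exp (-(p * x)) / s₁ ^ p :=
      div_nonneg (Real.exp_pos _).le (Real.rpow_pos_of_pos hs1 p).le
    have hcc₂ : (0:ℝ) ≤ Real.exp (-(p * x)) / s₂ ^ p :=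
      div_nonneg (Real.exp_pos _).le (Real.rpow_pos_of_pos hs2 p).le
    calc Real.exp (t * s₁) + Real.exp (t - t / Real.exp s₂) * (Real.exp (-(p * x)) / s₁ ^ p) +
        Real.exp t * (Real.exp (-(p * x)) / s₂ ^ p)
        ≤ Real.exp (T * s₁) + Real.exp (T - T / Real.exp s₂) * (Real.exp (-(p * x)) / s₁ ^ p) +
          Real.exp T * (Real.exp (-(p * x)) / s₂ ^ p) := by
          gcongr
      _ < 1 / q := hkey
  have := core_LB q hq F hF.1.2 t s₁ s₂ (η ^ p / s₁ ^ p) (η ^ p / s₂ ^ p) ht0' hs1 hs2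
    hc₁ hc₂ hkey'
  linarith

end Glue


/-- Lemma 5.2: as `η → 0+`,
`T_q^*(η;p) = p (log(1/η) + log log log(1/η)) + log((1−q)/q) + o(1)`. -/
theorem TqStar_asymptotics (p q : ℝ) (hp : 0 < p) (hp2 : p < 2) (hq : 0 < q) (hq1 : q < 1) :
    Tendsto (fun η : ℝ =>
        (TqStar q p η).toReal -
          (p * (Real.log (1 / η) + Real.log (Real.log (Real.log (1 / η)))) +
            Real.log ((1 - q) / q)))
      (nhdsWithin 0 (Set.Ioi 0)) (nhds 0) := by
  rw [Metric.tendsto_nhds]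
  intro ε hε
  have hε2 : 0 < ε / 2 := by linarith
  have hpos : ∀ᶠ η in nhdsWithin (0:ℝ) (Set.Ioi 0),
      ε / 2 ≤ p * (Real.log (1 / η) + Real.log (Real.log (Real.log (1 / η)))) +
        Real.log ((1 - q) / q) := by
    have h := (hLtend).eventually ((ht0 p q 0 hp).eventually_ge_atTop (ε / 2))
    filter_upwards [h] with η hη
    simp only [t0, L2, add_zero] at hη
    exact hη
  filter_upwards [ub_glue p q (ε / 2) hp hq hq1 hε2, lb_glue p q (ε / 2) hp hq hq1 hε2, hpos]
    with η hub hlb hpos'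
  set A := p * (Real.log (1 / η) + Real.log (Real.log (Real.log (1 / η)))) +
    Real.log ((1 - q) / q) with hA
  have hne : TqStar q p η ≠ ⊤ := ne_top_of_le_ne_top ENNReal.ofReal_ne_top hub
  have hupper : (TqStar q p η).toReal ≤ A + ε / 2 :=
    ENNReal.toReal_le_of_le_ofReal (by linarith) hub
  have hlower : A - ε / 2 ≤ (TqStar q p η).toReal := by
    have := ENNReal.toReal_mono hne hlb
    rwa [ENNReal.toReal_ofReal (by linarith)] at this
  clear_value A
  rw [Real.dist_eq, sub_zero]
  rw [abs_lt]
  constructor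
  · linarith
  · linarith
end
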